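/- arXiv:math/0610905 — 9 statements merged into one kernel-verified Lean document; each statement's English description precedes it below -/
import Mathlib

section
/- Let (Ω,P) be a probability space, Ψ an Orlicz function, and g ∈ L^∞(Ω,P) a function that is not P-almost everywhere zero. Then the Luxemburg norm of g satisfies ‖g‖_Ψ ≤ ‖g‖_∞ / Ψ⁻¹(‖g‖_∞/‖g‖₁); equivalently, ∫_Ω Ψ( |g| · Ψ⁻¹(‖g‖_∞/‖g‖₁) / ‖g‖_∞ ) dP ≤ 1, where ‖g‖_∞ is the essential supremum of |g| and ‖g‖₁ = ∫_Ω |g| dP. -/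
open MeasureTheory ENNReal

/-- The Luxemburg norm of a complex-valued function with respect to an Orlicz
function `Ψ` and a measure `μ`, with the convention `inf ∅ = ∞`. -/
noncomputable def luxNorm {α : Type*} [MeasurableSpace α] (Ψ : ℝ → ℝ)
    (μ : Measure α) (f : α → ℂ) : ENNReal :=
  sInf {C : ENNReal | ∃ c : ℝ, 0 < c ∧ C = ENNReal.ofReal c ∧
    (∫⁻ a, ENNReal.ofReal (Ψ (‖f a‖ / c)) ∂μ) ≤ 1}

theorem stmt_0 {Ω : Type*} [MeasurableSpace Ω] (P : Measure Ω) [IsProbabilityMeasure P]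
    (Ψ Ψinv : ℝ → ℝ)
    (hΨ0 : Ψ 0 = 0)
    (hΨmono : StrictMonoOn Ψ (Set.Ici 0))
    (hΨconv : StrictConvexOn ℝ (Set.Ici 0) Ψ)
    (hΨcont : ContinuousOn Ψ (Set.Ici 0))
    (hΨlim : Filter.Tendsto (fun x => Ψ x / x) Filter.atTop Filter.atTop)
    (hΨinv1 : ∀ x, 0 ≤ x → Ψinv (Ψ x) = x)
    (hΨinv2 : ∀ y, 0 ≤ y → Ψ (Ψinv y) = y)
    (hΨinv0 : ∀ y, 0 ≤ y → 0 ≤ Ψinv y)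
    (g : Ω → ℂ) (hg : MemLp g ⊤ P) (hgne : ¬ (g =ᵐ[P] 0)) :
    luxNorm Ψ P g ≤ ENNReal.ofReal
        ((eLpNorm g ⊤ P).toReal /
          Ψinv ((eLpNorm g ⊤ P).toReal / ∫ ω, ‖g ω‖ ∂P)) ∧
    ∫⁻ ω, ENNReal.ofReal
        (Ψ (‖g ω‖ *
            Ψinv ((eLpNorm g ⊤ P).toReal / ∫ ω, ‖g ω‖ ∂P) /
            (eLpNorm g ⊤ P).toReal)) ∂P ≤ 1 := by
  set M := (eLpNorm g ⊤ P).toReal with hMdef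
  set L := ∫ ω, ‖g ω‖ ∂P with hLdef
  have hgi : Integrable g P := memLp_one_iff_integrable.mp (hg.mono_exponent le_top)
  have hgabs : Integrable (fun ω => ‖g ω‖) P := by
    simpa using hgi.norm
  have hM : 0 < M := by
    refine ENNReal.toReal_pos ?_ hg.eLpNorm_lt_top.ne
    intro h
    exact hgne ((eLpNorm_eq_zero_iff hg.aestronglyMeasurable (by norm_num)).mp h)
  have hL : 0 < L := by
    rcases lt_or_eq_of_le (integral_nonneg (f := fun ω => ‖g ω‖) (μ := P) (fun ω => norm_nonneg (g ω))) with h | h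
    · exact h
    · exfalso
      have h0 : (fun ω => ‖g ω‖) =ᵐ[P] 0 := by
        rw [← integral_eq_zero_iff_of_nonneg (fun ω => norm_nonneg _) hgabs]
        exact h.symm
      exact hgne (h0.mono fun ω hω => by
        simpa using hω)
  have hMLpos : 0 < M / L := div_pos hM hL
  set I := Ψinv (M / L) with hIdef
  have hIpos : 0 < I := by
    rcases lt_or_eq_of_le (hΨinv0 _ hMLpos.le) with h | h
    · exact h
    · exfalso
      have := hΨinv2 (M / L) hMLpos.le
      rw [← h, hΨ0] at this
      exact hMLpos.ne this
  have hbound : ∀ᵐ ω ∂P, ‖g ω‖ ≤ M := by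
    have := ae_le_eLpNormEssSup (f := g) (μ := P)
    filter_upwards [this] with ω hω
    have h1 : (‖g ω‖ₑ).toReal ≤ M := by
      rw [hMdef, eLpNorm_exponent_top]
      exact ENNReal.toReal_mono hg.eLpNorm_lt_top.ne (by simpa [eLpNorm_exponent_top] using hω)
    simpa using h1
  have hpt : ∀ᵐ ω ∂P, ENNReal.ofReal (Ψ (‖g ω‖ * I / M)) ≤
      ENNReal.ofReal (‖g ω‖ / L) := by
    filter_upwards [hbound] with ω hω
    apply ENNReal.ofReal_le_ofReal
    set x := ‖g ω‖ with hx
    have hx0 : 0 ≤ x := norm_nonneg _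
    have ht0 : 0 ≤ x / M := div_nonneg hx0 hM.le
    have ht1 : x / M ≤ 1 := (div_le_one hM).mpr hω
    have hconv := hΨconv.convexOn.2 (Set.mem_Ici.mpr hIpos.le)
      (Set.mem_Ici.mpr le_rfl) ht0 (show (0:ℝ) ≤ 1 - x / M by linarith) (show x / M + (1 - x / M) = 1 by ring)
    simp only [smul_eq_mul, mul_zero, add_zero, hΨ0] at hconv
    have heq : x * I / M = x / M * I := mul_div_right_comm x I M
    rw [heq]
    calc Ψ (x / M * I) ≤ x / M * Ψ I := hconv
      _ = x / M * (M / L) := by rw [hIdef, hΨinv2 _ hMLpos.le]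
      _ = x / L := by rw [div_mul_div_comm, mul_comm x M, mul_div_mul_left _ _ hM.ne']
  have key : ∫⁻ ω, ENNReal.ofReal (Ψ (‖g ω‖ * I / M)) ∂P ≤ 1 := by
    calc ∫⁻ ω, ENNReal.ofReal (Ψ (‖g ω‖ * I / M)) ∂P
        ≤ ∫⁻ ω, ENNReal.ofReal (‖g ω‖ / L) ∂P := lintegral_mono_ae hpt
      _ = ENNReal.ofReal (∫ ω, ‖g ω‖ / L ∂P) := by
          rw [ofReal_integral_eq_lintegral_ofReal (hgabs.div_const L)
            (Filter.Eventually.of_forall fun ω => div_nonneg (norm_nonneg _) hL.le)]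
      _ = ENNReal.ofReal (L / L) := by rw [integral_div]
      _ = 1 := by rw [div_self hL.ne', ENNReal.ofReal_one]
  refine ⟨?_, key⟩
  apply sInf_le
  refine ⟨M / I, div_pos hM hIpos, rfl, ?_⟩
  simp_rw [div_div_eq_mul_div]
  exact key
end

section
/- For every Orlicz function Ψ, every a ∈ 𝕋 and every 0 ≤ r < 1, the restriction of u_{a,r} to 𝕋 satisfies ∫_𝕋 |u_{a,r}| dm = (1−r)/(1+r), and its Luxemburg norm in L^Ψ(𝕋,m) satisfies ‖u_{a,r}‖_Ψ ≤ 1/Ψ⁻¹((1+r)/(1−r)); in particular ‖u_{a,r}‖_Ψ ≤ 1/Ψ⁻¹(1/(1−r)). -/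
open MeasureTheory

/-- The normalized Lebesgue (Haar) measure on the unit circle `𝕋 ⊆ ℂ`,
realized as a measure on `ℂ` carried by the circle. -/
noncomputable def circleMeasure : Measure ℂ :=
  (ENNReal.ofReal (2 * Real.pi))⁻¹ •
    (Measure.map (fun t : ℝ => Complex.exp (t * Complex.I))
      (volume.restrict (Set.Ioc 0 (2 * Real.pi))))

/-- The function `u_{a,r}(z) = ((1-r)/(1 - conj(a)·r·z))²`. -/
noncomputable def uar (a : ℂ) (r : ℝ) (z : ℂ) : ℂ :=
  (((1 : ℂ) - (r : ℂ)) / (1 - (starRingEnd ℂ) a * (r : ℂ) * z)) ^ 2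

open Complex Set Metric

lemma denom_ne {c z : ℂ} (hc : ‖c‖ < 1) (hz : ‖z‖ ≤ 1) :
    (1 : ℂ) - c * z ≠ 0 := by
  rw [sub_ne_zero]
  intro h
  have : ‖c * z‖ < 1 := by
    rw [norm_mul]
    nlinarith [norm_nonneg c, norm_nonneg z]
  rw [← h] at this; simp at this

lemma abs_c (a : ℂ) (ha : ‖a‖ = 1) (r : ℝ) (hr0 : 0 ≤ r) :
    ‖(starRingEnd ℂ) a * (r:ℂ)‖ = r := by
  simp [map_mul, ha, _root_.abs_of_nonneg hr0]

lemma abs_uar (a : ℂ) (r : ℝ) (hr1 : r ≤ 1) (z : ℂ) :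
    ‖uar a r z‖ =
      (1 - r)^2 / Complex.normSq (1 - (starRingEnd ℂ) a * (r:ℂ) * z) := by
  have h1 : ((1:ℂ) - (r:ℂ)) = ((1 - r : ℝ) : ℂ) := by push_cast; ring
  rw [uar, norm_pow, norm_div, h1, Complex.norm_real, Real.norm_eq_abs, _root_.abs_of_nonneg (by linarith),
    div_pow, Complex.sq_norm]

lemma contour (c : ℂ) (hc : ‖c‖ < 1) :
    (∮ z in C(0,1), (z - (starRingEnd ℂ) c)⁻¹ • (1 - c * z)⁻¹) =
      (2 * Real.pi * Complex.I) * (1 - c * (starRingEnd ℂ) c)⁻¹ := by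
  have hf : DiffContOnCl ℂ (fun z => ((1 : ℂ) - c * z)⁻¹) (ball 0 1) := by
    apply DifferentiableOn.diffContOnCl
    rw [closure_ball (0:ℂ) one_ne_zero]
    apply DifferentiableOn.inv
    · exact (differentiableOn_const _).sub ((differentiable_id.const_mul c).differentiableOn)
    · intro z hz
      exact denom_ne hc (by simpa using mem_closedBall_zero_iff.1 hz)
  have hw : (starRingEnd ℂ) c ∈ ball (0:ℂ) 1 := by
    simp [mem_ball_zero_iff, hc]
  have := hf.circleIntegral_sub_inv_smul hw
  rw [this]
  simp [smul_eq_mul]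

lemma key (a : ℂ) (ha : ‖a‖ = 1) (r : ℝ) (hr0 : 0 ≤ r) (hr1 : r < 1)
    (z : ℂ) (hz : ‖z‖ = 1) :
    ((‖uar a r z‖ : ℝ) : ℂ) =
      (-Complex.I * ((1:ℂ) - (r:ℂ))^2) *
        ((z * Complex.I) * ((z - (starRingEnd ℂ) ((starRingEnd ℂ) a * (r:ℂ)))⁻¹ *
          ((1 - ((starRingEnd ℂ) a * (r:ℂ)) * z)⁻¹))) := by
  set c : ℂ := (starRingEnd ℂ) a * (r:ℂ) with hcdef
  have hcabs : ‖c‖ = r := abs_c a ha r hr0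
  have hzz : z * (starRingEnd ℂ) z = 1 := by
    rw [Complex.mul_conj]; norm_cast
    rw [← Complex.sq_norm, hz]; norm_num
  have hd1 : (1:ℂ) - c * z ≠ 0 := denom_ne (by rw [hcabs]; exact hr1) hz.le
  have hd2 : z - (starRingEnd ℂ) c ≠ 0 := by
    rw [sub_ne_zero]
    intro h
    have : ‖z‖ = r := by rw [h]; simpa using hcabs
    rw [hz] at this; linarith
  rw [abs_uar a r hr1.le]
  have hzne : z ≠ 0 := by
    intro h; rw [h] at hz; simp at hz
  have hIfact : ∀ A B : ℂ, (-I * A) * ((z*I)*B) = A*(z*B) := by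
    intro A B
    linear_combination (-(A*z*B)) * Complex.I_sq
  rw [hIfact]
  have hsplit : z - (starRingEnd ℂ) c = z * (1 - (starRingEnd ℂ) c * (starRingEnd ℂ) z) := by
    linear_combination ((starRingEnd ℂ) c) * hzz
  have hconj : (starRingEnd ℂ) (1 - c*z) = 1 - (starRingEnd ℂ) c * (starRingEnd ℂ) z := by
    simp [map_sub, map_mul, mul_comm]
  have hne : (1:ℂ) - (starRingEnd ℂ) c * (starRingEnd ℂ) z ≠ 0 := by
    rw [← hconj]
    intro h
    exact hd1 (by simpa using congrArg (starRingEnd ℂ) h)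
  have hnsq : (Complex.normSq (1 - c * z) : ℂ) =
      (1 - c*z) * ((1:ℂ) - (starRingEnd ℂ) c * (starRingEnd ℂ) z) := by
    rw [← hconj]; exact (Complex.mul_conj _).symm
  push_cast
  rw [hnsq, hsplit]
  field_simp

lemma integral_F (a : ℂ) (ha : ‖a‖ = 1) (r : ℝ) (hr0 : 0 ≤ r) (hr1 : r < 1) :
    ∫ t in (0:ℝ)..(2*Real.pi), ‖uar a r (Complex.exp (t*Complex.I))‖ =
      2*Real.pi*(1-r)/(1+r) := by
  set c : ℂ := (starRingEnd ℂ) a * (r:ℂ) with hcdef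
  have hcabs : ‖c‖ = r := abs_c a ha r hr0
  have hc1 : ‖c‖ < 1 := by rw [hcabs]; exact hr1
  have hcc : c * (starRingEnd ℂ) c = (r:ℂ)^2 := by
    have h1 : (starRingEnd ℂ) a * a = 1 := by
      rw [mul_comm, Complex.mul_conj]
      norm_cast
      rw [← Complex.sq_norm, ha]; norm_num
    rw [hcdef]
    simp only [map_mul, Complex.conj_conj, Complex.conj_ofReal]
    linear_combination (r:ℂ)^2 * h1
  have hCI : (∫ t in (0:ℝ)..(2*Real.pi),
      (Complex.exp (t*Complex.I) * Complex.I) *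
        ((Complex.exp (t*Complex.I) - (starRingEnd ℂ) c)⁻¹ *
          (1 - c * Complex.exp (t*Complex.I))⁻¹)) =
      (2 * Real.pi * Complex.I) * (1 - (r:ℂ)^2)⁻¹ := by
    have h := contour c hc1
    rw [hcc] at h
    rw [← h, circleIntegral]
    congr 1
    ext t
    simp [deriv_circleMap, circleMap, smul_eq_mul]
  have hmain : ((∫ t in (0:ℝ)..(2*Real.pi),
      ‖uar a r (Complex.exp (t*Complex.I))‖ : ℝ) : ℂ) =
      ((2*Real.pi*(1-r)/(1+r) : ℝ) : ℂ) := by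
    rw [← intervalIntegral.integral_ofReal]
    have heq : ∀ t : ℝ, ((‖uar a r (Complex.exp (t*Complex.I))‖ : ℝ) : ℂ) =
        (-Complex.I * ((1:ℂ) - (r:ℂ))^2) *
          ((Complex.exp (t*Complex.I) * Complex.I) *
            ((Complex.exp (t*Complex.I) - (starRingEnd ℂ) c)⁻¹ *
              (1 - c * Complex.exp (t*Complex.I))⁻¹)) := by
      intro t
      exact key a ha r hr0 hr1 _ (Complex.norm_exp_ofReal_mul_I t)
    rw [intervalIntegral.integral_congr (fun t _ => heq t),
      intervalIntegral.integral_const_mul, hCI]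
    have h1r : (1:ℂ) - (r:ℂ)^2 ≠ 0 := by
      intro h
      have : ((1 - r^2 : ℝ) : ℂ) = 0 := by push_cast; linear_combination h
      have h2 : (1 - r^2 : ℝ) = 0 := by exact_mod_cast this
      nlinarith
    have h1pr : (1:ℂ) + (r:ℂ) ≠ 0 := by
      intro h
      have : ((1 + r : ℝ) : ℂ) = 0 := by push_cast; linear_combination h
      have h2 : (1 + r : ℝ) = 0 := by exact_mod_cast this
      linarith
    push_cast
    field_simp
    linear_combination ((-1 + (r:ℂ) + (r:ℂ)^2 - (r:ℂ)^3)) * Complex.I_sq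
  exact_mod_cast hmain

lemma meas_g : Measurable (fun t : ℝ => Complex.exp (t * Complex.I)) := by fun_prop

lemma meas_f (a : ℂ) (r : ℝ) : Measurable (fun z => ‖uar a r z‖) := by
  apply continuous_norm.measurable.comp
  unfold uar; fun_prop

lemma cont_comp (a : ℂ) (ha : ‖a‖ = 1) (r : ℝ) (hr0 : 0 ≤ r) (hr1 : r < 1) :
    Continuous (fun t : ℝ => ‖uar a r (Complex.exp (t * Complex.I))‖) := by
  have hc1 : ‖(starRingEnd ℂ) a * (r:ℂ)‖ < 1 := by
    rw [abs_c a ha r hr0]; exact hr1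
  apply continuous_norm.comp
  unfold uar
  apply Continuous.pow
  apply Continuous.div continuous_const
  · fun_prop
  · intro t
    exact denom_ne hc1 (le_of_eq (Complex.norm_exp_ofReal_mul_I t))

lemma integral_circle_eq (a : ℂ) (ha : ‖a‖ = 1) (r : ℝ) (hr0 : 0 ≤ r) (hr1 : r < 1) :
    ∫ z, ‖uar a r z‖ ∂circleMeasure = (1 - r) / (1 + r) := by
  rw [circleMeasure, integral_smul_measure,
    integral_map (meas_g).aemeasurable (meas_f a r).aestronglyMeasurable,
    ← intervalIntegral.integral_of_le (by positivity : (0:ℝ) ≤ 2*Real.pi),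
    integral_F a ha r hr0 hr1]
  have hpi : (0:ℝ) < 2*Real.pi := by positivity
  rw [ENNReal.toReal_inv, ENNReal.toReal_ofReal hpi.le, smul_eq_mul]
  have h1pr : (0:ℝ) < 1 + r := by linarith
  field_simp

lemma integrable_circle (a : ℂ) (ha : ‖a‖ = 1) (r : ℝ) (hr0 : 0 ≤ r) (hr1 : r < 1) :
    Integrable (fun z => ‖uar a r z‖) circleMeasure := by
  rw [circleMeasure]
  refine Integrable.smul_measure ?_ (by simp [ENNReal.inv_ne_top, Real.pi_pos])
  rw [integrable_map_measure (meas_f a r).aestronglyMeasurable (meas_g).aemeasurable]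
  exact (cont_comp a ha r hr0 hr1).integrableOn_Ioc

lemma ae_circle : ∀ᵐ z ∂circleMeasure, ‖z‖ = 1 := by
  rw [circleMeasure]
  refine Filter.Eventually.filter_mono (Measure.absolutelyContinuous_of_le_smul
    (c := (ENNReal.ofReal (2 * Real.pi))⁻¹) le_rfl).ae_le ?_
  rw [MeasureTheory.ae_map_iff (meas_g).aemeasurable
    (show MeasurableSet {z : ℂ | ‖z‖ = 1} from
      continuous_norm.measurable (measurableSet_singleton 1))]
  exact Filter.Eventually.of_forall (fun t => Complex.norm_exp_ofReal_mul_I t)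

lemma abs_uar_le_one (a : ℂ) (ha : ‖a‖ = 1) (r : ℝ) (hr0 : 0 ≤ r) (hr1 : r < 1)
    (z : ℂ) (hz : ‖z‖ = 1) : ‖uar a r z‖ ≤ 1 := by
  rw [abs_uar a r hr1.le]
  have h2 : 1 - r ≤ ‖1 - (starRingEnd ℂ) a * (r:ℂ) * z‖ := by
    have := norm_sub_norm_le (1 : ℂ) ((starRingEnd ℂ) a * (r:ℂ) * z)
    simpa [map_mul, ha, hz, _root_.abs_of_nonneg hr0] using this
  have h3 : (1-r)^2 ≤ Complex.normSq (1 - (starRingEnd ℂ) a * (r:ℂ) * z) := by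
    rw [← Complex.sq_norm]
    have h1r : (0:ℝ) ≤ 1 - r := by linarith
    nlinarith
  have h4 : (0:ℝ) < (1-r)^2 := by nlinarith
  exact div_le_one_of_le₀ h3 (by linarith)

theorem stmt_1
    (Ψ Ψinv : ℝ → ℝ)
    (hΨ0 : Ψ 0 = 0)
    (hΨmono : StrictMonoOn Ψ (Set.Ici 0))
    (hΨconv : StrictConvexOn ℝ (Set.Ici 0) Ψ)
    (hΨcont : ContinuousOn Ψ (Set.Ici 0))
    (hΨlim : Filter.Tendsto (fun x => Ψ x / x) Filter.atTop Filter.atTop)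
    (hΨinv1 : ∀ x, 0 ≤ x → Ψinv (Ψ x) = x)
    (hΨinv2 : ∀ y, 0 ≤ y → Ψ (Ψinv y) = y)
    (hΨinv0 : ∀ y, 0 ≤ y → 0 ≤ Ψinv y)
    (a : ℂ) (ha : ‖a‖ = 1) (r : ℝ) (hr0 : 0 ≤ r) (hr1 : r < 1) :
    (∫ z, ‖uar a r z‖ ∂circleMeasure) = (1 - r) / (1 + r) ∧
    luxNorm Ψ circleMeasure (uar a r) ≤ ENNReal.ofReal (1 / Ψinv ((1 + r) / (1 - r))) ∧
    luxNorm Ψ circleMeasure (uar a r) ≤ ENNReal.ofReal (1 / Ψinv (1 / (1 - r))) := by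
  have h1r : (0:ℝ) < 1 - r := by linarith
  have h1pr : (0:ℝ) < 1 + r := by linarith
  set s : ℝ := (1 + r) / (1 - r) with hsdef
  have hs0 : 0 < s := by positivity
  have hΨinv_pos : ∀ y, 0 < y → 0 < Ψinv y := by
    intro y hy
    rcases lt_or_eq_of_le (hΨinv0 y hy.le) with h | h
    · exact h
    · exfalso
      have := hΨinv2 y hy.le
      rw [← h, hΨ0] at this
      linarith
  have hΨinv_mono : ∀ y₁ y₂, 0 ≤ y₁ → y₁ ≤ y₂ → Ψinv y₁ ≤ Ψinv y₂ := by
    intro y₁ y₂ hy1 hy12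
    by_contra h
    push_neg at h
    have := hΨmono (Set.mem_Ici.2 (hΨinv0 y₂ (by linarith))) (Set.mem_Ici.2 (hΨinv0 y₁ hy1)) h
    rw [hΨinv2 y₁ hy1, hΨinv2 y₂ (by linarith)] at this
    linarith
  have hconv_bound : ∀ t x : ℝ, 0 ≤ t → t ≤ 1 → 0 ≤ x → Ψ (t*x) ≤ t * Ψ x := by
    intro t x ht ht1 hx
    have h := hΨconv.convexOn.2 (Set.mem_Ici.2 hx) (Set.mem_Ici.2 (le_refl (0:ℝ))) ht
      (by linarith : (0:ℝ) ≤ 1 - t) (by ring)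
    simpa [hΨ0, smul_eq_mul] using h
  have hsΨ : 0 < Ψinv s := hΨinv_pos s hs0
  have hmain : luxNorm Ψ circleMeasure (uar a r) ≤ ENNReal.ofReal (1 / Ψinv s) := by
    apply sInf_le
    refine ⟨1 / Ψinv s, by positivity, rfl, ?_⟩
    have hptwise : ∀ᵐ z ∂circleMeasure,
        ENNReal.ofReal (Ψ (‖uar a r z‖ / (1 / Ψinv s))) ≤
          ENNReal.ofReal s * ENNReal.ofReal (‖uar a r z‖) := by
      filter_upwards [ae_circle] with z hz
      have hu1 : ‖uar a r z‖ ≤ 1 := abs_uar_le_one a ha r hr0 hr1 z hz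
      have hu0 : 0 ≤ ‖uar a r z‖ := norm_nonneg _
      have heq : ‖uar a r z‖ / (1 / Ψinv s) = ‖uar a r z‖ * Ψinv s := by
        field_simp
      rw [heq]
      have hb : Ψ (‖uar a r z‖ * Ψinv s) ≤ ‖uar a r z‖ * s := by
        calc Ψ (‖uar a r z‖ * Ψinv s)
            ≤ ‖uar a r z‖ * Ψ (Ψinv s) :=
              hconv_bound _ _ hu0 hu1 hsΨ.le
          _ = ‖uar a r z‖ * s := by rw [hΨinv2 s hs0.le]
      calc ENNReal.ofReal (Ψ (‖uar a r z‖ * Ψinv s))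
          ≤ ENNReal.ofReal (‖uar a r z‖ * s) := ENNReal.ofReal_le_ofReal hb
        _ = ENNReal.ofReal s * ENNReal.ofReal (‖uar a r z‖) := by
            rw [mul_comm, ENNReal.ofReal_mul hs0.le]
    calc ∫⁻ z, ENNReal.ofReal (Ψ (‖uar a r z‖ / (1 / Ψinv s))) ∂circleMeasure
        ≤ ∫⁻ z, ENNReal.ofReal s * ENNReal.ofReal (‖uar a r z‖) ∂circleMeasure :=
          lintegral_mono_ae hptwise
      _ = ENNReal.ofReal s * ∫⁻ z, ENNReal.ofReal (‖uar a r z‖) ∂circleMeasure :=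
          lintegral_const_mul' _ _ ENNReal.ofReal_ne_top
      _ = ENNReal.ofReal s * ENNReal.ofReal ((1 - r) / (1 + r)) := by
          rw [← ofReal_integral_eq_lintegral_ofReal (integrable_circle a ha r hr0 hr1)
            (Filter.Eventually.of_forall (fun z => norm_nonneg _)),
            integral_circle_eq a ha r hr0 hr1]
      _ = 1 := by
          rw [← ENNReal.ofReal_mul hs0.le]
          have : s * ((1 - r) / (1 + r)) = 1 := by
            rw [hsdef]; field_simp
          rw [this, ENNReal.ofReal_one]
  refine ⟨integral_circle_eq a ha r hr0 hr1, hmain, hmain.trans ?_⟩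
  apply ENNReal.ofReal_le_ofReal
  have hle : 1 / (1 - r) ≤ s := by
    rw [hsdef, div_le_div_iff₀ h1r h1r]
    nlinarith
  have hpos2 : 0 < Ψinv (1 / (1 - r)) := hΨinv_pos _ (by positivity)
  have := hΨinv_mono (1 / (1-r)) s (by positivity) hle
  exact one_div_le_one_div_of_le hpos2 this
end

section
/- Let Ψ be an Orlicz function and z ∈ 𝔻 = {w ∈ ℂ : |w| < 1}. Let D(z) = sup{ |f(z)| : f holomorphic on 𝔻 and ∫_𝕋 Ψ(|f(r·w)|) dm(w) ≤ 1 for every r ∈ [0,1) } (the norm of the evaluation functional at z on the unit ball of the Hardy–Orlicz space H^Ψ). Then (1/4)·Ψ⁻¹((1+|z|)/(1−|z|)) ≤ D(z) ≤ 2·Ψ⁻¹((1+|z|)/(1−|z|)); in particular (1/4)·Ψ⁻¹(1/(1−|z|)) ≤ D(z) ≤ 4·Ψ⁻¹(1/(1−|z|)). -/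
open MeasureTheory

/-- The norm of the evaluation functional at `z` on the unit ball of the
Hardy–Orlicz space `H^Ψ`. -/
noncomputable def hardyEvalNorm (Ψ : ℝ → ℝ) (z : ℂ) : ℝ :=
  sSup {x : ℝ | ∃ f : ℂ → ℂ, DifferentiableOn ℂ f (Metric.ball 0 1) ∧
    (∀ r : ℝ, 0 ≤ r → r < 1 →
      ∫⁻ w, ENNReal.ofReal (Ψ (‖f ((r : ℂ) * w)‖)) ∂circleMeasure ≤ 1) ∧
    x = ‖f z‖}

noncomputable def Complex.abs : AbsoluteValue ℂ ℝ := NormedField.toAbsoluteValue ℂ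

theorem Complex.abs_apply (z : ℂ) : Complex.abs z = ‖z‖ := rfl

theorem Complex.norm_eq_abs (z : ℂ) : ‖z‖ = Complex.abs z := rfl

theorem Complex.sq_abs (z : ℂ) : Complex.abs z ^ 2 = Complex.normSq z := Complex.sq_norm z

theorem Complex.normSq_eq_abs (x : ℂ) : Complex.normSq x = Complex.abs x ^ 2 :=
  Complex.normSq_eq_norm_sq x

@[simp]
theorem Complex.abs_conj (z : ℂ) : Complex.abs ((starRingEnd ℂ) z) = Complex.abs z :=
  Complex.norm_conj z

@[simp]
theorem Complex.abs_ofReal (r : ℝ) : Complex.abs (r : ℂ) = |r| := by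
  rw [Complex.abs_apply, Complex.norm_real, Real.norm_eq_abs]

@[simp]
theorem Complex.abs_exp_ofReal_mul_I (t : ℝ) : Complex.abs (Complex.exp (t * Complex.I)) = 1 :=
  Complex.norm_exp_ofReal_mul_I t

theorem Complex.continuous_abs : Continuous Complex.abs := continuous_norm

theorem abs_circleMap_zero (R θ : ℝ) : Complex.abs (circleMap 0 R θ) = |R| :=
  norm_circleMap_zero R θ

open Metric Real Complex intervalIntegral

section Aux

noncomputable def nuC : Measure ℂ :=
  Measure.map (fun t : ℝ => Complex.exp (t * Complex.I))
    (volume.restrict (Set.Ioc 0 (2 * Real.pi)))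

lemma nuC_compl : nuC (Metric.sphere (0:ℂ) 1)ᶜ = 0 := by
  rw [nuC, Measure.map_apply (by fun_prop) (isClosed_sphere).measurableSet.compl]
  convert measure_empty
  · ext t
    simp [Complex.abs_exp_ofReal_mul_I, Complex.dist_eq]
  · infer_instance

lemma nuC_restrict : nuC.restrict (Metric.sphere (0:ℂ) 1) = nuC :=
  Measure.restrict_eq_self_of_ae_mem (by
    rw [MeasureTheory.ae_iff]
    exact nuC_compl)

lemma lint_transfer {F : ℂ → ENNReal} (hF : ContinuousOn F (Metric.sphere (0:ℂ) 1)) :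
    ∫⁻ w, F w ∂nuC = ∫⁻ t in Set.Ioc 0 (2*π), F (Complex.exp (t*Complex.I)) := by
  have hmeas : AEMeasurable F nuC := by
    have := hF.aemeasurable (μ := nuC) (isClosed_sphere).measurableSet
    rwa [nuC_restrict] at this
  rw [nuC, MeasureTheory.lintegral_map' (by rwa [← nuC]) (by fun_prop : Measurable fun t : ℝ => Complex.exp (t*Complex.I)).aemeasurable]

lemma circleMeasure_lint {F : ℂ → ENNReal} (hF : ContinuousOn F (Metric.sphere (0:ℂ) 1)) :
    ∫⁻ w, F w ∂circleMeasure
      = (ENNReal.ofReal (2*π))⁻¹ * ∫⁻ t in Set.Ioc 0 (2*π), F (Complex.exp (t*Complex.I)) := by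
  rw [circleMeasure, lintegral_smul_measure, ← nuC, lint_transfer hF, smul_eq_mul]

lemma twopi_ne : ENNReal.ofReal (2*π) ≠ 0 := by
  simp [Real.pi_pos, ENNReal.ofReal_eq_zero, not_le]

lemma le_of_inv_mul_le {L : ENNReal} (h : (ENNReal.ofReal (2*π))⁻¹ * L ≤ 1) :
    L ≤ ENNReal.ofReal (2*π) := by
  have := mul_le_mul_right h (ENNReal.ofReal (2*π))
  rwa [← mul_assoc, ENNReal.mul_inv_cancel twopi_ne ENNReal.ofReal_ne_top, one_mul, mul_one] at this

lemma sq_abs_eq (a : ℂ) (t : ℝ) :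
    (((Complex.abs (1 - a*Complex.exp (t*Complex.I)))^2 : ℝ) : ℂ)
      = (1 - a*Complex.exp (t*Complex.I)) * (Complex.exp (t*Complex.I) - (starRingEnd ℂ) a)
        * (Complex.exp (t*Complex.I))⁻¹ := by
  have hw0 : Complex.exp (t*Complex.I) ≠ 0 := Complex.exp_ne_zero _
  have h1 : Complex.abs (Complex.exp (t*Complex.I)) = 1 := Complex.abs_exp_ofReal_mul_I t
  have hcw : (starRingEnd ℂ) (Complex.exp (t*Complex.I)) = (Complex.exp (t*Complex.I))⁻¹ :=
    (Complex.inv_eq_conj (by rwa [Complex.norm_eq_abs])).symm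
  rw [Complex.sq_abs, ← Complex.mul_conj]
  rw [map_sub, map_one, map_mul, hcw]
  field_simp

lemma one_sub_ne (a w : ℂ) (ha : Complex.abs a < 1) (hw : Complex.abs w ≤ 1) :
    (1:ℂ) - a * w ≠ 0 := by
  intro h
  rw [sub_eq_zero] at h
  have : Complex.abs (a*w) < 1 := by
    rw [map_mul]
    calc Complex.abs a * Complex.abs w ≤ Complex.abs a * 1 :=
      mul_le_mul_of_nonneg_left hw (Complex.abs.nonneg a)
    _ < 1 := by simpa using ha
  simp [← h] at this

lemma keyInt (a : ℂ) (ha : Complex.abs a < 1) :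
    ∫ t in (0:ℝ)..(2*π), ((Complex.abs (1 - a * Complex.exp (t*Complex.I)))^2)⁻¹
      = 2*π / (1 - (Complex.abs a)^2) := by
  set c := (starRingEnd ℂ) a with hc
  have hconj : c ∈ ball (0:ℂ) 1 := by
    simp only [mem_ball_zero_iff, hc, Complex.norm_eq_abs, Complex.abs_conj]; exact ha
  have habs : ∀ t : ℝ, Complex.abs (circleMap 0 1 t) = 1 := fun t => by
    simpa using abs_circleMap_zero 1 t
  have hcm : ∀ t : ℝ, circleMap 0 1 t = Complex.exp (t*Complex.I) := fun t => by
    simp [circleMap]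
  have hw0 : ∀ t : ℝ, circleMap 0 1 t ≠ 0 := fun t h => by
    have := habs t; rw [h] at this; simp at this
  have hne1 : ∀ t : ℝ, (1:ℂ) - a * circleMap 0 1 t ≠ 0 := fun t =>
    one_sub_ne a _ ha (habs t).le
  have hne2 : ∀ t : ℝ, circleMap 0 1 t - c ≠ 0 := by
    intro t h
    rw [sub_eq_zero] at h
    have := habs t
    rw [h] at this
    simp [hc, Complex.abs_conj] at this
    exact absurd this ha.ne
  have hone : (1:ℂ) - a * c ≠ 0 := by
    rw [hc, Complex.mul_conj, Complex.normSq_eq_abs]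
    intro h
    rw [sub_eq_zero] at h
    have : (1:ℝ) = Complex.abs a ^ 2 := by exact_mod_cast h
    nlinarith [Complex.abs.nonneg a]
  have h1 : (∮ w in C(0,1), (w - c)⁻¹) = 2 * π * Complex.I :=
    circleIntegral.integral_sub_inv_of_mem_ball hconj
  have h2 : (∮ w in C(0,1), a * ((1:ℂ) - a*w)⁻¹) = 0 := by
    apply Complex.circleIntegral_eq_zero_of_differentiable_on_off_countable zero_le_one
      Set.countable_empty
    · apply ContinuousOn.mul continuousOn_const
      apply ContinuousOn.inv₀ (by fun_prop)
      intro w hw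
      simp only [mem_closedBall_zero_iff] at hw
      exact one_sub_ne a w ha (by simpa [Complex.abs_apply] using hw)
    · intro w hw
      simp only [Set.diff_empty, mem_ball_zero_iff] at hw
      exact (differentiableAt_const _).mul (((differentiableAt_const _).sub
        ((differentiableAt_const _).mul differentiableAt_id)).inv
        (one_sub_ne a w ha (by simpa [Complex.abs_apply] using hw.le)))
  rw [circleIntegral] at h1 h2
  simp only [deriv_circleMap, smul_eq_mul] at h1 h2
  have hint1 : IntervalIntegrable (fun t => circleMap 0 1 t * Complex.I * (circleMap 0 1 t - c)⁻¹)
      volume 0 (2*π) := by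
    apply Continuous.intervalIntegrable
    exact ((continuous_circleMap 0 1).mul continuous_const).mul
      (((continuous_circleMap 0 1).sub continuous_const).inv₀ hne2)
  have hint2 : IntervalIntegrable
      (fun t => circleMap 0 1 t * Complex.I * (a * ((1:ℂ) - a * circleMap 0 1 t)⁻¹))
      volume 0 (2*π) := by
    apply Continuous.intervalIntegrable
    exact ((continuous_circleMap 0 1).mul continuous_const).mul (continuous_const.mul
      ((continuous_const.sub (continuous_const.mul (continuous_circleMap 0 1))).inv₀ hne1))
  have hJ : (∫ t in (0:ℝ)..(2*π), (circleMap 0 1 t * Complex.I * (circleMap 0 1 t - c)⁻¹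
      + circleMap 0 1 t * Complex.I * (a * ((1:ℂ) - a * circleMap 0 1 t)⁻¹)))
      = 2 * π * Complex.I := by
    rw [integral_add hint1 hint2, h1, h2, add_zero]
  have hpt : ∀ t : ℝ, circleMap 0 1 t * Complex.I * (circleMap 0 1 t - c)⁻¹
      + circleMap 0 1 t * Complex.I * (a * ((1:ℂ) - a * circleMap 0 1 t)⁻¹)
      = ((1:ℂ) - a*c) * Complex.I *
        ((((Complex.abs (1 - a * Complex.exp (t*Complex.I)))^2)⁻¹ : ℝ) : ℂ) := by
    intro t
    rw [Complex.ofReal_inv, sq_abs_eq a t, ← hcm t, ← hc]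
    have h5 : 1 - circleMap 0 1 t * a ≠ 0 := by rw [mul_comm]; exact hne1 t
    field_simp [hw0 t, hne1 t, hne2 t, h5]
    ring
  have hJ' : (∫ t in (0:ℝ)..(2*π), (circleMap 0 1 t * Complex.I * (circleMap 0 1 t - c)⁻¹
      + circleMap 0 1 t * Complex.I * (a * ((1:ℂ) - a * circleMap 0 1 t)⁻¹)))
      = ((1:ℂ) - a*c) * Complex.I *
        ((∫ t in (0:ℝ)..(2*π), ((Complex.abs (1 - a * Complex.exp (t*Complex.I)))^2)⁻¹ : ℝ) : ℂ) := by
    rw [integral_congr (g := fun t => ((1:ℂ) - a*c) * Complex.I *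
      ((((Complex.abs (1 - a * Complex.exp (t*Complex.I)))^2)⁻¹ : ℝ) : ℂ)) (fun t _ => hpt t)]
    rw [intervalIntegral.integral_const_mul, intervalIntegral.integral_ofReal]
  rw [hJ] at hJ'
  -- now : 2πI = (1 - a c) * I * ofReal S
  have hac : a * c = ((((Complex.abs a)^2 : ℝ)) : ℂ) := by
    rw [hc, Complex.mul_conj, Complex.sq_abs]
  rw [hac] at hJ' hone
  set S := (∫ t in (0:ℝ)..(2*π), ((Complex.abs (1 - a * Complex.exp (t*Complex.I)))^2)⁻¹ : ℝ)
  have h9 : ((2*π : ℝ) : ℂ) = (((1 - (Complex.abs a)^2) * S : ℝ) : ℂ) := by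
    apply mul_left_cancel₀ Complex.I_ne_zero
    push_cast
    push_cast at hJ'
    linear_combination hJ'
  rw [Complex.ofReal_inj] at h9
  have hapos : (0:ℝ) < 1 - (Complex.abs a)^2 := by nlinarith [Complex.abs.nonneg a]
  rw [eq_div_iff hapos.ne']
  linarith [h9]

lemma circleMap_sub_factor (z : ℂ) {s : ℝ} (hs0 : 0 < s) (t : ℝ) :
    Complex.abs (circleMap 0 s t - z)
      = s * Complex.abs (1 - ((starRingEnd ℂ) z / s) * Complex.exp (t*Complex.I)) := by
  have e1 : Complex.exp (↑t*Complex.I) * Complex.exp (-(↑t*Complex.I)) = 1 := by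
    rw [← Complex.exp_add]; simp
  have hprod : circleMap 0 s t - z
      = (↑s * Complex.exp (↑t*Complex.I)) *
        (starRingEnd ℂ) (1 - ((starRingEnd ℂ) z / s) * Complex.exp (↑t*Complex.I)) := by
    rw [map_sub, map_one, map_mul, map_div₀, Complex.conj_conj, Complex.conj_ofReal]
    rw [show (starRingEnd ℂ) (Complex.exp (↑t*Complex.I)) = Complex.exp (-(↑t*Complex.I)) by
      rw [← Complex.exp_conj]; simp]
    rw [Complex.exp_neg]
    have := Complex.exp_ne_zero (↑t*Complex.I)
    rw [circleMap_zero]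
    field_simp [Complex.exp_ne_zero, Complex.ofReal_ne_zero.mpr hs0.ne']
  rw [hprod, map_mul, map_mul, Complex.abs_conj, Complex.abs_ofReal, abs_of_pos hs0,
    Complex.abs_exp_ofReal_mul_I, mul_one]

lemma poissonMass {z : ℂ} {s : ℝ} (hzs : Complex.abs z < s) :
    ∫ t in (0:ℝ)..(2*π),
      ((s^2 - (Complex.abs z)^2) / (Complex.abs (circleMap 0 s t - z))^2) = 2*π := by
  have hs0 : 0 < s := (Complex.abs.nonneg z).trans_lt hzs
  set a : ℂ := (starRingEnd ℂ) z / s with ha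
  have haabs : Complex.abs a = Complex.abs z / s := by
    rw [ha, map_div₀, Complex.abs_conj, Complex.abs_ofReal, abs_of_pos hs0]
  have ha1 : Complex.abs a < 1 := by
    rw [haabs, div_lt_one hs0]; exact hzs
  have hpt : ∀ t : ℝ, ((s^2 - (Complex.abs z)^2) / (Complex.abs (circleMap 0 s t - z))^2)
      = ((s^2 - (Complex.abs z)^2)/s^2) *
        ((Complex.abs (1 - a * Complex.exp (t*Complex.I)))^2)⁻¹ := by
    intro t
    have hXpos : 0 < Complex.abs (1 - a * Complex.exp (↑t*Complex.I)) := by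
      apply AbsoluteValue.pos
      intro h
      rw [sub_eq_zero] at h
      have : Complex.abs (a * Complex.exp (↑t*Complex.I)) < 1 := by
        rw [map_mul, Complex.abs_exp_ofReal_mul_I, mul_one]; exact ha1
      rw [← h] at this
      simp at this
    rw [circleMap_sub_factor z hs0 t, mul_pow, div_mul_eq_div_div, div_eq_mul_inv]
  rw [integral_congr (fun t _ => hpt t), intervalIntegral.integral_const_mul, keyInt a ha1, haabs]
  have h1 : (0:ℝ) < 1 - (Complex.abs z / s)^2 := by
    have : (Complex.abs z / s)^2 < 1 := by
      apply pow_lt_one₀ (by positivity) (by rw [div_lt_one hs0]; exact hzs)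
      norm_num
    linarith
  have h3 : (s^2 - (Complex.abs z)^2)/s^2 = 1 - (Complex.abs z / s)^2 := by
    field_simp
  rw [h3, mul_comm, div_mul_cancel₀ _ h1.ne']

lemma poissonRep {f : ℂ → ℂ} (hf : DifferentiableOn ℂ f (Metric.ball 0 1)) {z : ℂ} {s : ℝ}
    (hzs : Complex.abs z < s) (hs1 : s < 1) :
    ((2*π : ℝ) : ℂ) * f z
      = ∫ t in (0:ℝ)..(2*π),
          (((s^2 - (Complex.abs z)^2) / (Complex.abs (circleMap 0 s t - z))^2 : ℝ) : ℂ)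
            * f (circleMap 0 s t) := by
  have hs0 : 0 < s := (Complex.abs.nonneg z).trans_lt hzs
  have habs : ∀ t : ℝ, Complex.abs (circleMap 0 s t) = s := fun t => by
    simpa [abs_of_pos hs0] using abs_circleMap_zero s t
  have hmem : ∀ t : ℝ, circleMap 0 s t ∈ Metric.ball (0:ℂ) 1 := fun t => by
    simp only [mem_ball_zero_iff, Complex.norm_eq_abs, habs t]; exact hs1
  have hwz : ∀ t : ℝ, circleMap 0 s t - z ≠ 0 := fun t h => by
    rw [sub_eq_zero] at h
    have := habs t
    rw [h] at this
    exact hzs.ne this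
  have hden : ∀ w : ℂ, Complex.abs w ≤ s → ((s:ℂ))^2 - (starRingEnd ℂ) z * w ≠ 0 := by
    intro w hw h
    rw [sub_eq_zero] at h
    have h2 : Complex.abs ((starRingEnd ℂ) z * w) < s^2 := by
      rw [map_mul, Complex.abs_conj]
      calc Complex.abs z * Complex.abs w ≤ Complex.abs z * s :=
        mul_le_mul_of_nonneg_left hw (Complex.abs.nonneg z)
      _ < s * s := mul_lt_mul_of_pos_right hzs hs0
      _ = s^2 := (sq s).symm
    rw [← h] at h2
    simp [abs_of_pos hs0] at h2
  have hdc : DiffContOnCl ℂ f (Metric.ball 0 s) :=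
    ⟨hf.mono (Metric.ball_subset_ball hs1.le), by
      rw [closure_ball (0:ℂ) hs0.ne']
      exact hf.continuousOn.mono (Metric.closedBall_subset_ball hs1)⟩
  have hzmem : z ∈ Metric.ball (0:ℂ) s := by
    simp only [mem_ball_zero_iff, Complex.norm_eq_abs]; exact hzs
  have hA := hdc.circleIntegral_sub_inv_smul hzmem
  have hB : (∮ w in C(0,s), ((starRingEnd ℂ) z * (((s:ℂ))^2 - (starRingEnd ℂ) z * w)⁻¹) * f w)
      = 0 := by
    apply Complex.circleIntegral_eq_zero_of_differentiable_on_off_countable hs0.le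
      Set.countable_empty
    · apply ContinuousOn.mul
      · exact continuousOn_const.mul ((continuousOn_const.sub
          (continuousOn_const.mul continuousOn_id)).inv₀ (fun w hw =>
            hden w (by simpa [Complex.norm_eq_abs] using mem_closedBall_zero_iff.mp hw)))
      · exact hf.continuousOn.mono (Metric.closedBall_subset_ball hs1)
    · intro w hw
      simp only [Set.diff_empty, mem_ball_zero_iff, Complex.norm_eq_abs] at hw
      apply DifferentiableAt.mul
      · exact (differentiableAt_const _).mul (((differentiableAt_const _).sub
          ((differentiableAt_const _).mul differentiableAt_id)).inv (hden w hw.le))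
      · exact hf.differentiableAt (isOpen_ball.mem_nhds (by
          simp only [mem_ball_zero_iff, Complex.norm_eq_abs]; exact hw.trans hs1))
  rw [circleIntegral] at hA hB
  simp only [deriv_circleMap, smul_eq_mul] at hA hB
  have hcontf : Continuous fun t : ℝ => f (circleMap 0 s t) :=
    hf.continuousOn.comp_continuous (continuous_circleMap 0 s) hmem
  have hint1 : IntervalIntegrable
      (fun t => circleMap 0 s t * Complex.I * ((circleMap 0 s t - z)⁻¹ * f (circleMap 0 s t)))
      volume 0 (2*π) :=
    (((continuous_circleMap 0 s).mul continuous_const).mul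
      ((((continuous_circleMap 0 s).sub continuous_const).inv₀ hwz).mul
        hcontf)).intervalIntegrable _ _
  have hint2 : IntervalIntegrable
      (fun t => circleMap 0 s t * Complex.I *
        ((starRingEnd ℂ) z * (((s:ℂ))^2 - (starRingEnd ℂ) z * circleMap 0 s t)⁻¹
          * f (circleMap 0 s t)))
      volume 0 (2*π) :=
    (((continuous_circleMap 0 s).mul continuous_const).mul
      ((continuous_const.mul ((continuous_const.sub
        (continuous_const.mul (continuous_circleMap 0 s))).inv₀
          (fun t => hden _ (habs t).le))).mul hcontf)).intervalIntegrable _ _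
  have hJ : (∫ t in (0:ℝ)..(2*π),
      (circleMap 0 s t * Complex.I * ((circleMap 0 s t - z)⁻¹ * f (circleMap 0 s t))
        + circleMap 0 s t * Complex.I *
          ((starRingEnd ℂ) z * (((s:ℂ))^2 - (starRingEnd ℂ) z * circleMap 0 s t)⁻¹
            * f (circleMap 0 s t))))
      = 2 * π * Complex.I * f z := by
    rw [integral_add hint1 hint2, hA, hB, add_zero]
  have hpt : ∀ t : ℝ,
      circleMap 0 s t * Complex.I * ((circleMap 0 s t - z)⁻¹ * f (circleMap 0 s t))
        + circleMap 0 s t * Complex.I *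
          ((starRingEnd ℂ) z * (((s:ℂ))^2 - (starRingEnd ℂ) z * circleMap 0 s t)⁻¹
            * f (circleMap 0 s t))
      = Complex.I * ((((s^2 - (Complex.abs z)^2) / (Complex.abs (circleMap 0 s t - z))^2 : ℝ) : ℂ)
          * f (circleMap 0 s t)) := by
    intro t
    set w := circleMap 0 s t with hwdef
    have hw : Complex.abs w = s := habs t
    have hs2 : ((s:ℂ))^2 = w * (starRingEnd ℂ) w := by
      rw [Complex.mul_conj, Complex.normSq_eq_abs, hw]; push_cast; ring
    have h1 : w - z ≠ 0 := hwz t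
    have h2 : (starRingEnd ℂ) w - (starRingEnd ℂ) z ≠ 0 := by
      intro h
      apply h1
      rw [sub_eq_zero] at h ⊢
      have := congrArg (starRingEnd ℂ) h
      simpa using this
    have h3 : ((s:ℂ))^2 - (starRingEnd ℂ) z * w ≠ 0 := hden w hw.le
    have habsz : (((Complex.abs (w - z))^2 : ℝ) : ℂ)
        = (w - z) * ((starRingEnd ℂ) w - (starRingEnd ℂ) z) := by
      rw [Complex.sq_abs, ← Complex.mul_conj, map_sub]
    have habsz2 : (((Complex.abs z)^2 : ℝ) : ℂ) = z * (starRingEnd ℂ) z := by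
      rw [Complex.sq_abs, ← Complex.mul_conj]
    rw [Complex.ofReal_div, Complex.ofReal_sub, habsz, habsz2]
    rw [show ((s^2:ℝ):ℂ) = ((s:ℂ))^2 by push_cast; ring, hs2]
    rw [hs2] at h3
    have hw0 : w ≠ 0 := by
      intro h0; rw [h0] at hw; simp at hw; exact hs0.ne' hw.symm
    field_simp
    ring
  rw [integral_congr (fun t _ => hpt t), intervalIntegral.integral_const_mul] at hJ
  apply mul_left_cancel₀ Complex.I_ne_zero
  rw [hJ]; push_cast; ring

lemma upper_s {Ψ Φ : ℝ → ℝ} {lam A : ℝ} (hΦc : Continuous Φ)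
    (hΦeq : ∀ x : ℝ, 0 ≤ x → Φ x = Ψ x) (hΦnn : ∀ x, 0 ≤ Φ x)
    (hsplit : ∀ y : ℝ, 0 ≤ y → y ≤ lam + (lam/A)*Φ y)
    {f : ℂ → ℂ} (hf : DifferentiableOn ℂ f (Metric.ball 0 1))
    {z : ℂ} {s : ℝ} (hρs : Complex.abs z < s) (hs1 : s < 1)
    (hint : ∫⁻ w, ENNReal.ofReal (Ψ (Complex.abs (f ((s:ℝ) * w)))) ∂circleMeasure ≤ 1)
    (hlam0 : 0 ≤ lam) (hA0 : 0 < A) :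
    Complex.abs (f z) ≤ lam + lam * ((s + Complex.abs z)/(s - Complex.abs z))/A := by
  set ρ := Complex.abs z with hρ
  have hρ0 : 0 ≤ ρ := Complex.abs.nonneg z
  have hs0 : 0 < s := hρ0.trans_lt hρs
  have hsρ : 0 < s - ρ := by linarith
  have htwopi : (0:ℝ) < 2*π := by positivity
  -- continuity of f on relevant circles
  have hmem : ∀ t : ℝ, circleMap 0 s t ∈ Metric.ball (0:ℂ) 1 := fun t => by
    simp only [mem_ball_zero_iff, Complex.norm_eq_abs]
    simpa [abs_of_pos hs0, hs1] using (abs_circleMap_zero s t).le.trans_lt (by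
      rw [abs_of_pos hs0]; exact hs1)
  have hcontf : Continuous fun t : ℝ => f (circleMap 0 s t) :=
    hf.continuousOn.comp_continuous (continuous_circleMap 0 s) hmem
  -- transfer the integral hypothesis
  have hFeq : (fun w : ℂ => ENNReal.ofReal (Ψ (Complex.abs (f ((s:ℝ) * w)))))
      = fun w : ℂ => ENNReal.ofReal (Φ (Complex.abs (f ((s:ℝ) * w)))) :=
    funext fun w => by rw [hΦeq _ (Complex.abs.nonneg _)]
  rw [hFeq] at hint
  have hFcont : ContinuousOn (fun w : ℂ => ENNReal.ofReal (Φ (Complex.abs (f ((s:ℝ) * w)))))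
      (Metric.sphere (0:ℂ) 1) := by
    apply ENNReal.continuous_ofReal.comp_continuousOn
    apply hΦc.comp_continuousOn
    apply Complex.continuous_abs.comp_continuousOn
    apply hf.continuousOn.comp ((continuous_const.mul continuous_id).continuousOn)
    intro w hw
    rw [mem_sphere_zero_iff_norm] at hw
    simp only [Pi.mul_apply, id_eq, mem_ball_zero_iff, norm_mul, Complex.norm_real, Real.norm_eq_abs,
      abs_of_pos hs0, hw, mul_one]
    exact hs1
  rw [circleMeasure_lint hFcont] at hint
  have hL := le_of_inv_mul_le hint
  -- to Bochner integral bound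
  set g : ℝ → ℝ := fun t => Φ (Complex.abs (f (circleMap 0 s t))) with hg
  have hgc : Continuous g := hΦc.comp (Complex.continuous_abs.comp hcontf)
  have hgnn : ∀ t, 0 ≤ g t := fun t => hΦnn _
  have hgeq : (fun t : ℝ => ENNReal.ofReal (Φ (Complex.abs (f ((s:ℝ) * Complex.exp (t*Complex.I))))))
      = fun t : ℝ => ENNReal.ofReal (g t) := by
    funext t; rw [hg]; simp [circleMap_zero]
  rw [hgeq] at hL
  have hgint : IntegrableOn g (Set.Ioc 0 (2*π)) := hgc.integrableOn_Ioc
  have hgle : ∫ t in Set.Ioc 0 (2*π), g t ≤ 2*π := by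
    rw [← ENNReal.ofReal_le_ofReal_iff htwopi.le,
      ofReal_integral_eq_lintegral_ofReal hgint (Filter.Eventually.of_forall hgnn)]
    exact hL
  have hgleI : ∫ t in (0:ℝ)..(2*π), g t ≤ 2*π := by
    rw [intervalIntegral.integral_of_le htwopi.le]; exact hgle
  -- Poisson
  set P : ℝ → ℝ := fun t => (s^2 - ρ^2) / (Complex.abs (circleMap 0 s t - z))^2 with hPdef
  have hwz : ∀ t : ℝ, circleMap 0 s t - z ≠ 0 := fun t h => by
    rw [sub_eq_zero] at h
    have h2 : Complex.abs (circleMap 0 s t) = s := by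
      simpa [abs_of_pos hs0] using abs_circleMap_zero s t
    rw [h] at h2
    exact hρs.ne h2
  have hPcont : Continuous P := by
    apply continuous_const.div
    · exact (Complex.continuous_abs.comp ((continuous_circleMap 0 s).sub continuous_const)).pow 2
    · intro t
      exact pow_ne_zero 2 (Complex.abs.ne_zero (hwz t))
  have hPnn : ∀ t, 0 ≤ P t := fun t =>
    div_nonneg (by nlinarith) (sq_nonneg _)
  have hPmax : ∀ t, P t ≤ (s+ρ)/(s-ρ) := by
    intro t
    have h2 : s - ρ ≤ Complex.abs (circleMap 0 s t - z) := by
      have h3 := norm_sub_norm_le (circleMap 0 s t) z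
      have h4 : Complex.abs (circleMap 0 s t) = s := by
        simpa [abs_of_pos hs0] using abs_circleMap_zero s t
      rw [Complex.norm_eq_abs, Complex.norm_eq_abs, Complex.norm_eq_abs, h4] at h3
      exact h3
    have h5 : (s-ρ)^2 ≤ (Complex.abs (circleMap 0 s t - z))^2 :=
      pow_le_pow_left₀ hsρ.le h2 2
    calc P t ≤ (s^2-ρ^2)/(s-ρ)^2 :=
      div_le_div_of_nonneg_left (by nlinarith) (by positivity) h5
    _ = (s+ρ)/(s-ρ) := by
      rw [div_eq_div_iff (by positivity) hsρ.ne']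
      ring
  set Pm := (s+ρ)/(s-ρ) with hPm
  have hPm0 : 0 ≤ Pm := div_nonneg (by linarith) hsρ.le
  have hy : ∀ t, 0 ≤ Complex.abs (f (circleMap 0 s t)) := fun t => Complex.abs.nonneg _
  have habsf : Continuous fun t : ℝ => Complex.abs (f (circleMap 0 s t)) :=
    Complex.continuous_abs.comp hcontf
  have hnorm : 2*π*Complex.abs (f z)
      ≤ ∫ t in (0:ℝ)..(2*π), P t * Complex.abs (f (circleMap 0 s t)) := by
    have h1 : 2*π*Complex.abs (f z) = Complex.abs (((2*π:ℝ):ℂ) * (f z)) := by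
      rw [map_mul, Complex.abs_ofReal, abs_of_pos htwopi]
    rw [h1, poissonRep hf hρs hs1]
    have h2 := intervalIntegral.norm_integral_le_integral_norm
      (f := fun t => (((s^2-ρ^2)/(Complex.abs (circleMap 0 s t - z))^2 : ℝ):ℂ)
        * f (circleMap 0 s t)) (μ := volume) htwopi.le
    rw [Complex.norm_eq_abs] at h2
    refine h2.trans (le_of_eq (integral_congr fun t _ => ?_))
    rw [Complex.norm_eq_abs, map_mul, Complex.abs_ofReal, _root_.abs_of_nonneg (hPnn t)]
  have hintP : IntervalIntegrable (fun t => P t * Complex.abs (f (circleMap 0 s t)))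
      volume 0 (2*π) := (hPcont.mul habsf).intervalIntegrable _ _
  have hintR : IntervalIntegrable (fun t => lam * P t + (lam/A)*Pm * g t) volume 0 (2*π) :=
    ((continuous_const.mul hPcont).add (continuous_const.mul hgc)).intervalIntegrable _ _
  have hmono : ∫ t in (0:ℝ)..(2*π), P t * Complex.abs (f (circleMap 0 s t))
      ≤ ∫ t in (0:ℝ)..(2*π), (lam * P t + (lam/A)*Pm * g t) := by
    apply intervalIntegral.integral_mono_on htwopi.le hintP hintR
    intro t _
    have hy1 := hsplit _ (hy t)
    have step1 : P t * Complex.abs (f (circleMap 0 s t)) ≤ P t * (lam + (lam/A) * g t) :=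
      mul_le_mul_of_nonneg_left hy1 (hPnn t)
    have h3 : P t * ((lam/A) * g t) ≤ Pm * ((lam/A) * g t) :=
      mul_le_mul_of_nonneg_right (hPmax t) (mul_nonneg (div_nonneg hlam0 hA0.le) (hgnn t))
    nlinarith [hPnn t, hgnn t]
  have hPint : ∫ t in (0:ℝ)..(2*π), P t = 2*π := poissonMass hρs
  have h4 : ∫ t in (0:ℝ)..(2*π), (lam * P t + (lam/A)*Pm * g t)
      = lam*(2*π) + (lam/A)*Pm * ∫ t in (0:ℝ)..(2*π), g t := by
    rw [integral_add (f := fun t => lam * P t) (g := fun t => (lam/A)*Pm * g t)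
      ((continuous_const.mul hPcont).intervalIntegrable _ _)
      ((continuous_const.mul hgc).intervalIntegrable _ _),
      intervalIntegral.integral_const_mul, intervalIntegral.integral_const_mul, hPint]
  have h5 : (lam/A)*Pm * (∫ t in (0:ℝ)..(2*π), g t) ≤ (lam/A)*Pm * (2*π) :=
    mul_le_mul_of_nonneg_left hgleI (mul_nonneg (div_nonneg hlam0 hA0.le) hPm0)
  have hfinal := (hnorm.trans (hmono.trans_eq h4))
  have h6 : (2*π) * Complex.abs (f z) ≤ (2*π) * (lam + (lam/A)*Pm) := by nlinarith
  have h7 := (mul_le_mul_iff_right₀ htwopi).mp h6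
  calc Complex.abs (f z) ≤ lam + (lam/A)*Pm := h7
  _ = lam + lam * Pm / A := by rw [div_mul_eq_mul_div]

noncomputable def testFn (lam ρ : ℝ) (z : ℂ) : ℂ → ℂ :=
  fun w => ((lam:ℝ):ℂ) * ((((1-ρ):ℝ):ℂ) * ((1:ℂ) - (starRingEnd ℂ) z * w)⁻¹)^2

lemma testFn_diff (lam ρ : ℝ) {z : ℂ} (hz : Complex.abs z < 1) :
    DifferentiableOn ℂ (testFn lam ρ z) (Metric.ball 0 1) := by
  intro w hw
  have hne : (1:ℂ) - (starRingEnd ℂ) z * w ≠ 0 := one_sub_ne _ w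
    (by rwa [Complex.abs_conj])
    (by simpa [Complex.norm_eq_abs] using (mem_ball_zero_iff.mp hw).le)
  exact (((((differentiableAt_id.const_mul ((starRingEnd ℂ) z)).const_sub (1:ℂ)).inv hne).const_mul
    ((((1-ρ):ℝ):ℂ))).pow 2 |>.const_mul ((lam:ℝ):ℂ)).differentiableWithinAt

lemma testFn_at (lam : ℝ) (hlam0 : 0 ≤ lam) {ρ : ℝ} {z : ℂ}
    (hρ : Complex.abs z = ρ) (hρ1 : ρ < 1) (hρ0 : 0 ≤ ρ) :
    Complex.abs (testFn lam ρ z z) = lam * ((1-ρ) * ((1-ρ^2)⁻¹))^2 := by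
  have h1 : (1:ℂ) - (starRingEnd ℂ) z * z = (((1 - ρ^2 : ℝ)) : ℂ) := by
    rw [mul_comm, Complex.mul_conj, Complex.normSq_eq_abs, hρ]
    push_cast; ring
  have h2 : (0:ℝ) < 1 - ρ^2 := by nlinarith
  rw [testFn, h1, ← Complex.ofReal_inv, ← Complex.ofReal_mul, ← Complex.ofReal_pow,
    ← Complex.ofReal_mul, Complex.abs_ofReal]
  apply _root_.abs_of_nonneg
  positivity
lemma testFn_int {Ψ Φ : ℝ → ℝ} {lam A ρ : ℝ} (hΦc : Continuous Φ)
    (hΦeq : ∀ x : ℝ, 0 ≤ x → Φ x = Ψ x)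
    (hscale : ∀ t x : ℝ, 0 ≤ t → t ≤ 1 → 0 ≤ x → Ψ (t*x) ≤ t * Ψ x)
    {z : ℂ} (hρ : Complex.abs z = ρ) (hρ1 : ρ < 1) (hρ0 : 0 ≤ ρ)
    (hAdef : A = (1+ρ)/(1-ρ)) (hΨlam : Ψ lam = A) (hlam0 : 0 ≤ lam)
    {r : ℝ} (hr0 : 0 ≤ r) (hr1 : r < 1) :
    ∫⁻ w, ENNReal.ofReal (Ψ (Complex.abs (testFn lam ρ z ((r:ℝ) * w)))) ∂circleMeasure ≤ 1 := by
  have h1ρ : (0:ℝ) < 1 - ρ := by linarith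
  have hA0 : 0 < A := by rw [hAdef]; positivity
  have htwopi : (0:ℝ) < 2*π := by positivity
  have hz1 : Complex.abs z < 1 := by rw [hρ]; exact hρ1
  set a : ℂ := (starRingEnd ℂ) z * ((r:ℝ):ℂ) with ha
  have haabs : Complex.abs a = ρ * r := by
    rw [ha, map_mul, Complex.abs_conj, Complex.abs_ofReal, hρ, _root_.abs_of_nonneg hr0]
  have ha1 : Complex.abs a < 1 := by rw [haabs]; nlinarith
  have hFeq : (fun w : ℂ => ENNReal.ofReal (Ψ (Complex.abs (testFn lam ρ z ((r:ℝ) * w)))))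
      = fun w : ℂ => ENNReal.ofReal (Φ (Complex.abs (testFn lam ρ z ((r:ℝ) * w)))) :=
    funext fun w => by rw [hΦeq _ (Complex.abs.nonneg _)]
  rw [hFeq]
  have hdiff := testFn_diff lam ρ hz1
  have hFcont : ContinuousOn
      (fun w : ℂ => ENNReal.ofReal (Φ (Complex.abs (testFn lam ρ z ((r:ℝ) * w)))))
      (Metric.sphere (0:ℂ) 1) := by
    apply ENNReal.continuous_ofReal.comp_continuousOn
    apply hΦc.comp_continuousOn
    apply Complex.continuous_abs.comp_continuousOn
    apply hdiff.continuousOn.comp ((continuous_const.mul continuous_id).continuousOn)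
    intro w hw
    rw [mem_sphere_zero_iff_norm] at hw
    simp only [Pi.mul_apply, id_eq, mem_ball_zero_iff, norm_mul, Complex.norm_real, Real.norm_eq_abs,
      _root_.abs_of_nonneg hr0, hw, mul_one]
    exact hr1
  rw [circleMeasure_lint hFcont]
  -- pointwise bound
  have hb : ∀ t : ℝ, Φ (Complex.abs (testFn lam ρ z ((r:ℝ) * Complex.exp (t*Complex.I))))
      ≤ A*(1-ρ)^2 * ((Complex.abs ((1:ℂ) - a * Complex.exp (t*Complex.I)))^2)⁻¹ := by
    intro t
    set e := Complex.exp (t*Complex.I) with he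
    have habse : Complex.abs e = 1 := Complex.abs_exp_ofReal_mul_I t
    set D := Complex.abs ((1:ℂ) - a * e) with hD
    have hDlb : 1 - ρ*r ≤ D := by
      have h3 := norm_sub_norm_le (1:ℂ) (a*e)
      rw [Complex.norm_eq_abs, Complex.norm_eq_abs, map_one, map_mul, habse, mul_one,
        haabs] at h3
      exact h3
    have hρr : ρ*r ≤ ρ := by nlinarith
    have hD0 : (0:ℝ) < D := by nlinarith
    have hinner : (1:ℂ) - (starRingEnd ℂ) z * (((r:ℝ):ℂ) * e) = 1 - a * e := by
      rw [ha, mul_assoc]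
    have hval : Complex.abs (testFn lam ρ z ((r:ℝ) * e)) = lam * ((1-ρ) * D⁻¹)^2 := by
      rw [testFn, hinner, map_mul, map_pow, map_mul, map_inv₀, Complex.abs_ofReal,
        Complex.abs_ofReal, _root_.abs_of_nonneg hlam0, _root_.abs_of_nonneg h1ρ.le, ← hD]
    set u : ℝ := ((1-ρ) * D⁻¹)^2 with hu
    have hu0 : 0 ≤ u := by positivity
    have hu1 : u ≤ 1 := by
      apply pow_le_one₀ (by positivity)
      rw [← div_eq_mul_inv, div_le_one hD0]
      linarith
    have hval0 : 0 ≤ lam * u := mul_nonneg hlam0 hu0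
    rw [hval, hΦeq _ hval0, mul_comm lam u]
    calc Ψ (u * lam) ≤ u * Ψ lam := hscale u lam hu0 hu1 hlam0
    _ = u * A := by rw [hΨlam]
    _ = A*(1-ρ)^2 * ((D)^2)⁻¹ := by rw [hu, mul_pow, inv_pow]; ring
  -- integral bound
  set b : ℝ → ℝ := fun t => A*(1-ρ)^2 *
    ((Complex.abs ((1:ℂ) - a * Complex.exp (t*Complex.I)))^2)⁻¹ with hbdef
  have hbne : ∀ t : ℝ, Complex.abs ((1:ℂ) - a * Complex.exp (t*Complex.I)) ≠ 0 := fun t =>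
    Complex.abs.ne_zero (one_sub_ne a _ ha1 (Complex.abs_exp_ofReal_mul_I t).le)
  have hbcont : Continuous b := by
    apply continuous_const.mul
    apply Continuous.inv₀
    · apply Continuous.pow
      apply Complex.continuous_abs.comp
      exact continuous_const.sub (continuous_const.mul (by fun_prop))
    · exact fun t => pow_ne_zero 2 (hbne t)
  have hbnn : ∀ t, 0 ≤ b t := fun t => by
    rw [hbdef]
    have := hA0
    positivity
  have hbint : IntegrableOn b (Set.Ioc 0 (2*π)) := hbcont.integrableOn_Ioc
  have hL3 : ∫ t in Set.Ioc 0 (2*π), b t ≤ 2*π := by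
    rw [← intervalIntegral.integral_of_le htwopi.le]
    rw [hbdef, intervalIntegral.integral_const_mul, keyInt a ha1, haabs]
    have hr2 : r^2 ≤ 1 := by nlinarith
    have hX : (ρ*r)^2 ≤ ρ^2 := by nlinarith [mul_nonneg (mul_nonneg hρ0 hρ0) (sub_nonneg.mpr hr2), sq_nonneg ρ]
    have h1X : (0:ℝ) < 1 - (ρ*r)^2 := by nlinarith
    have e1 : A*(1-ρ)^2 = (1+ρ)*(1-ρ) := by rw [hAdef]; field_simp
    rw [e1, mul_comm, div_mul_eq_mul_div, div_le_iff₀ h1X]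
    have h7 : (1+ρ)*(1-ρ) ≤ 1-(ρ*r)^2 := by nlinarith
    nlinarith [mul_le_mul_of_nonneg_left h7 htwopi.le]
  calc (ENNReal.ofReal (2*π))⁻¹ * ∫⁻ t in Set.Ioc 0 (2*π),
        ENNReal.ofReal (Φ (Complex.abs (testFn lam ρ z ((r:ℝ) * Complex.exp (t*Complex.I)))))
      ≤ (ENNReal.ofReal (2*π))⁻¹ * ∫⁻ t in Set.Ioc 0 (2*π), ENNReal.ofReal (b t) := by
        apply mul_le_mul_right
        exact lintegral_mono fun t => ENNReal.ofReal_le_ofReal (hb t)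
  _ = (ENNReal.ofReal (2*π))⁻¹ * ENNReal.ofReal (∫ t in Set.Ioc 0 (2*π), b t) := by
        rw [ofReal_integral_eq_lintegral_ofReal hbint (Filter.Eventually.of_forall hbnn)]
  _ ≤ (ENNReal.ofReal (2*π))⁻¹ * ENNReal.ofReal (2*π) := by
        exact mul_le_mul_right (ENNReal.ofReal_le_ofReal hL3) _
  _ = 1 := ENNReal.inv_mul_cancel twopi_ne ENNReal.ofReal_ne_top


end Aux

theorem stmt_2
    (Ψ Ψinv : ℝ → ℝ)
    (hΨ0 : Ψ 0 = 0)
    (hΨmono : StrictMonoOn Ψ (Set.Ici 0))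
    (hΨconv : StrictConvexOn ℝ (Set.Ici 0) Ψ)
    (hΨcont : ContinuousOn Ψ (Set.Ici 0))
    (hΨlim : Filter.Tendsto (fun x => Ψ x / x) Filter.atTop Filter.atTop)
    (hΨinv1 : ∀ x, 0 ≤ x → Ψinv (Ψ x) = x)
    (hΨinv2 : ∀ y, 0 ≤ y → Ψ (Ψinv y) = y)
    (hΨinv0 : ∀ y, 0 ≤ y → 0 ≤ Ψinv y)
    (z : ℂ) (hz : ‖z‖ < 1) :
    (1 / 4) * Ψinv ((1 + ‖z‖) / (1 - ‖z‖)) ≤ hardyEvalNorm Ψ z ∧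
    hardyEvalNorm Ψ z ≤ 2 * Ψinv ((1 + ‖z‖) / (1 - ‖z‖)) ∧
    (1 / 4) * Ψinv (1 / (1 - ‖z‖)) ≤ hardyEvalNorm Ψ z ∧
    hardyEvalNorm Ψ z ≤ 4 * Ψinv (1 / (1 - ‖z‖)) := by
  set ρ := ‖z‖ with hρdef
  have hρ0 : 0 ≤ ρ := Complex.abs.nonneg z
  have hρ1 : ρ < 1 := hz
  have h1ρ : (0:ℝ) < 1 - ρ := by linarith
  set A := (1+ρ)/(1-ρ) with hAdef
  have hA0 : (0:ℝ) < A := by rw [hAdef]; positivity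
  set lam := Ψinv A with hlamdef
  have hlam0 : 0 ≤ lam := hΨinv0 A hA0.le
  have hΨlam : Ψ lam = A := hΨinv2 A hA0.le
  set Φ : ℝ → ℝ := fun x => Ψ (max x 0) with hΦdef
  have hΦc : Continuous Φ := hΨcont.comp_continuous
    (continuous_id.max continuous_const) (fun x => Set.mem_Ici.mpr (le_max_right x 0))
  have hΦeq : ∀ x : ℝ, 0 ≤ x → Φ x = Ψ x := fun x hx => by
    rw [hΦdef]; simp [max_eq_left hx]
  have hΨnn : ∀ x : ℝ, 0 ≤ x → 0 ≤ Ψ x := by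
    intro x hx
    rcases eq_or_lt_of_le hx with h | h
    · rw [← h, hΨ0]
    · have := hΨmono Set.self_mem_Ici (Set.mem_Ici.mpr hx) h
      rw [hΨ0] at this; exact this.le
  have hΦnn : ∀ x : ℝ, 0 ≤ Φ x := fun x => hΨnn _ (le_max_right _ _)
  have hscale : ∀ t x : ℝ, 0 ≤ t → t ≤ 1 → 0 ≤ x → Ψ (t*x) ≤ t * Ψ x := by
    intro t x ht0 ht1 hx
    have h := hΨconv.convexOn.2 Set.self_mem_Ici (Set.mem_Ici.mpr hx)
      (by linarith : (0:ℝ) ≤ 1-t) ht0 (by ring)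
    simpa [hΨ0] using h
  have hsplit : ∀ y : ℝ, 0 ≤ y → y ≤ lam + (lam/A)*Φ y := by
    intro y hy
    rw [hΦeq _ hy]
    rcases le_or_gt y lam with h | h
    · have : 0 ≤ (lam/A) * Ψ y := mul_nonneg (div_nonneg hlam0 hA0.le) (hΨnn y hy)
      linarith
    · have hy0 : 0 < y := hlam0.trans_lt h
      have ht1 : lam / y ≤ 1 := (div_le_one hy0).mpr h.le
      have h2 := hscale (lam/y) y (div_nonneg hlam0 hy0.le) ht1 hy
      rw [div_mul_cancel₀ _ hy0.ne', hΨlam] at h2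
      rw [div_mul_eq_mul_div, le_div_iff₀ hy0] at h2
      have h4 : y ≤ (lam/A) * Ψ y := by
        rw [div_mul_eq_mul_div, le_div_iff₀ hA0]
        nlinarith
      linarith
  -- the set S
  rw [hardyEvalNorm]
  set S := {x : ℝ | ∃ f : ℂ → ℂ, DifferentiableOn ℂ f (Metric.ball 0 1) ∧
    (∀ r : ℝ, 0 ≤ r → r < 1 →
      ∫⁻ w, ENNReal.ofReal (Ψ (‖f ((r : ℂ) * w)‖)) ∂circleMeasure ≤ 1) ∧
    x = ‖f z‖} with hS
  -- upper bound on members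
  have hub : ∀ x ∈ S, x ≤ 2*lam := by
    rintro x ⟨f, hfd, hfi, rfl⟩
    have hkey : ∀ s : ℝ, ρ < s → s < 1 →
        Complex.abs (f z) ≤ lam + lam*((s+ρ)/(s-ρ))/A := by
      intro s hs1 hs2
      have hs0 : 0 ≤ s := hρ0.trans hs1.le
      exact upper_s hΦc hΦeq hΦnn hsplit hfd hs1 hs2 (hfi s hs0 hs2) hlam0 hA0
    haveI hNB : (nhdsWithin (1:ℝ) (Set.Ioo ρ 1)).NeBot := by
      apply mem_closure_iff_nhdsWithin_neBot.mp
      rw [closure_Ioo hρ1.ne]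
      exact ⟨hρ1.le, le_rfl⟩
    have c1 : ContinuousAt (fun s : ℝ => lam + lam*((s+ρ)/(s-ρ))/A) 1 := by
      apply ContinuousAt.add continuousAt_const
      apply ContinuousAt.div_const
      apply ContinuousAt.mul continuousAt_const
      exact ContinuousAt.div (continuousAt_id.add continuousAt_const)
        (continuousAt_id.sub continuousAt_const) (by simpa using h1ρ.ne')
    have hlim : Filter.Tendsto (fun s : ℝ => lam + lam*((s+ρ)/(s-ρ))/A)
        (nhdsWithin 1 (Set.Ioo ρ 1)) (nhds (lam + lam*((1+ρ)/(1-ρ))/A)) :=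
      Filter.Tendsto.mono_left c1.tendsto nhdsWithin_le_nhds
    have hfz : Complex.abs (f z) ≤ lam + lam*((1+ρ)/(1-ρ))/A := by
      apply ge_of_tendsto hlim
      filter_upwards [self_mem_nhdsWithin] with s hs
      exact hkey s hs.1 hs.2
    have heq : lam + lam*((1+ρ)/(1-ρ))/A = 2*lam := by
      rw [← hAdef, mul_div_assoc, div_self hA0.ne', mul_one]; ring
    linarith [hfz, heq.le, Complex.abs_apply (f z)]
  have hbdd : BddAbove S := ⟨2*lam, fun x hx => hub x hx⟩
  -- lower bound witness
  have hmem : Complex.abs (testFn lam ρ z z) ∈ S :=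
    ⟨testFn lam ρ z, testFn_diff lam ρ hz,
      fun r hr0 hr1 => testFn_int hΦc hΦeq hscale hρdef.symm hρ1 hρ0 hAdef hΨlam hlam0 hr0 hr1,
      rfl⟩
  have hlow : (1/4)*lam ≤ Complex.abs (testFn lam ρ z z) := by
    rw [testFn_at lam hlam0 hρdef.symm hρ1 hρ0]
    have h2 : (1-ρ) * ((1-ρ^2)⁻¹) = (1+ρ)⁻¹ := by
      rw [show (1:ℝ)-ρ^2 = (1-ρ)*(1+ρ) by ring, mul_inv, ← mul_assoc,
        mul_inv_cancel₀ h1ρ.ne', one_mul]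
    rw [h2]
    have h5 : (0:ℝ) < 1+ρ := by linarith
    have h6 : (1/2:ℝ) ≤ (1+ρ)⁻¹ := by
      rw [show (1/2:ℝ) = 2⁻¹ by norm_num]
      exact inv_anti₀ h5 (by linarith)
    have h3 : (1/4:ℝ) ≤ ((1+ρ)⁻¹)^2 := by nlinarith [inv_nonneg.mpr h5.le]
    nlinarith [mul_le_mul_of_nonneg_left h3 hlam0]
  have hmain_le : sSup S ≤ 2*lam := Real.sSup_le hub (by linarith)
  have hmain_ge : (1/4)*lam ≤ sSup S := hlow.trans (le_csSup hbdd hmem)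
  -- inverse function facts
  have hle : ∀ u v : ℝ, 0 ≤ u → 0 ≤ v → Ψ u ≤ Ψ v → u ≤ v := by
    intro u v hu hv h
    by_contra hcon
    push_neg at hcon
    exact absurd (hΨmono (Set.mem_Ici.mpr hv) (Set.mem_Ici.mpr hu) hcon) (not_lt.mpr h)
  have hinvmono : ∀ y₁ y₂ : ℝ, 0 ≤ y₁ → y₁ ≤ y₂ → Ψinv y₁ ≤ Ψinv y₂ := by
    intro y₁ y₂ h1 h2
    apply hle _ _ (hΨinv0 _ h1) (hΨinv0 _ (h1.trans h2))
    rw [hΨinv2 _ h1, hΨinv2 _ (h1.trans h2)]; exact h2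
  have hinvdouble : ∀ y : ℝ, 0 ≤ y → Ψinv (2*y) ≤ 2 * Ψinv y := by
    intro y hy
    have hy2 : (0:ℝ) ≤ 2*y := by linarith
    have hx0 : 0 ≤ Ψinv (2*y) := hΨinv0 _ hy2
    have h8 := hscale (1/2) (Ψinv (2*y)) (by norm_num) (by norm_num) hx0
    rw [hΨinv2 _ hy2] at h8
    have h9 : Ψ ((1/2) * Ψinv (2*y)) ≤ Ψ (Ψinv y) := by
      rw [hΨinv2 _ hy]; linarith
    have := hle _ _ (mul_nonneg (by norm_num) hx0) (hΨinv0 _ hy) h9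
    linarith
  have hinv1ρ0 : (0:ℝ) ≤ 1/(1-ρ) := by positivity
  refine ⟨hmain_ge, hmain_le, ?_, ?_⟩
  · have h10 : Ψinv (1/(1-ρ)) ≤ lam := by
      rw [hlamdef]
      apply hinvmono _ _ hinv1ρ0
      rw [hAdef]
      exact (div_le_div_iff_of_pos_right h1ρ).mpr (by linarith)
    calc (1/4)*Ψinv (1/(1-ρ)) ≤ (1/4)*lam := by linarith
    _ ≤ sSup S := hmain_ge
  · have h11 : lam ≤ 2*Ψinv (1/(1-ρ)) := by
      rw [hlamdef]
      refine le_trans ?_ (hinvdouble _ hinv1ρ0)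
      apply hinvmono _ _ hA0.le
      rw [hAdef, mul_one_div]
      exact (div_le_div_iff_of_pos_right h1ρ).mpr (by linarith)
    calc sSup S ≤ 2*lam := hmain_le
    _ ≤ 4*Ψinv (1/(1-ρ)) := by linarith
end

section
/- Let Ψ be an Orlicz function and φ : 𝕋 → ℂ a measurable function with |φ(w)| ≤ 1 for all w ∈ 𝕋. If condition (W) holds, then m({w ∈ 𝕋 : |φ(w)| = 1}) = 0. -/
open MeasureTheory

/-! ### Auxiliary lemmas -/

/-- Chord length on the circle is bounded by twice the angle difference. -/
lemma chord_bound (s t : ℝ) :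
    ‖Complex.exp (s * Complex.I) - Complex.exp (t * Complex.I)‖ ≤ 2 * |s - t| := by
  have h := Complex.norm_le_abs_re_add_abs_im
    (Complex.exp ((s:ℂ) * Complex.I) - Complex.exp ((t:ℂ) * Complex.I))
  have hre : (Complex.exp ((s:ℂ) * Complex.I) - Complex.exp ((t:ℂ) * Complex.I)).re
      = Real.cos s - Real.cos t := by
    simp [Complex.sub_re, Complex.exp_ofReal_mul_I_re]
  have him : (Complex.exp ((s:ℂ) * Complex.I) - Complex.exp ((t:ℂ) * Complex.I)).im
      = Real.sin s - Real.sin t := by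
    simp [Complex.sub_im, Complex.exp_ofReal_mul_I_im]
  rw [hre, him] at h
  have hcos : |Real.cos s - Real.cos t| ≤ |s - t| := by
    rw [Real.cos_sub_cos]
    rw [abs_mul, abs_mul]
    have h1 : |Real.sin ((s + t) / 2)| ≤ 1 := Real.abs_sin_le_one _
    have h2 : |Real.sin ((s - t) / 2)| ≤ |(s - t) / 2| := Real.abs_sin_le_abs
    have h3 : |(-2 : ℝ)| = 2 := by norm_num
    rw [h3]
    calc 2 * |Real.sin ((s + t)/2)| * |Real.sin ((s - t)/2)|
        ≤ 2 * 1 * |(s - t)/2| := by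
          apply mul_le_mul _ h2 (abs_nonneg _) (by norm_num)
          nlinarith [abs_nonneg (Real.sin ((s+t)/2))]
      _ = |s - t| := by rw [abs_div, abs_two]; ring
  have hsin : |Real.sin s - Real.sin t| ≤ |s - t| := by
    rw [Real.sin_sub_sin]
    rw [abs_mul, abs_mul]
    have h1 : |Real.cos ((s + t) / 2)| ≤ 1 := Real.abs_cos_le_one _
    have h2 : |Real.sin ((s - t) / 2)| ≤ |(s - t) / 2| := Real.abs_sin_le_abs
    have h3 : |(2 : ℝ)| = 2 := by norm_num
    rw [h3]
    calc 2 * |Real.sin ((s - t)/2)| * |Real.cos ((s + t)/2)|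
        ≤ 2 * |(s - t)/2| * 1 := by
          apply mul_le_mul _ h1 (abs_nonneg _) (by positivity)
          nlinarith [abs_nonneg (Real.sin ((s-t)/2))]
      _ = |s - t| := by rw [abs_div, abs_two]; ring
  linarith

/-- Lower bound `|u_{a,r}(z)| ≥ 1/4` when `z` is on the circle within distance `1-r` of `a`. -/
lemma uar_lb {a z : ℂ} {r : ℝ} (ha : ‖a‖ = 1) (hz : ‖z‖ = 1)
    (hr0 : 0 ≤ r) (hr1 : r < 1) (hclose : ‖z - a‖ ≤ 1 - r) :
    (1:ℝ)/4 ≤ ‖uar a r z‖ := by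
  have h1r : 0 < 1 - r := by linarith
  have hconj : (starRingEnd ℂ) a * a = 1 := by
    rw [mul_comm, Complex.mul_conj, Complex.normSq_eq_norm_sq, ha]
    norm_num
  have hden : (1:ℂ) - (starRingEnd ℂ) a * (r:ℂ) * z = (starRingEnd ℂ) a * (a - (r:ℂ) * z) := by
    rw [mul_sub, hconj]; ring
  have habs_den : ‖1 - (starRingEnd ℂ) a * (r:ℂ) * z‖
      = ‖a - (r:ℂ) * z‖ := by
    rw [hden, norm_mul, Complex.norm_conj, ha, one_mul]
  have h1rc : ‖(1:ℂ) - (r:ℂ)‖ = 1 - r := by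
    rw [show ((1:ℂ) - (r:ℂ)) = ((1 - r : ℝ) : ℂ) by push_cast; ring,
      Complex.norm_real, Real.norm_eq_abs, abs_of_pos h1r]
  have hrz : ‖(r:ℂ) * z‖ = r := by
    rw [norm_mul, hz, mul_one, Complex.norm_real, Real.norm_eq_abs, abs_of_nonneg hr0]
  have hup : ‖a - (r:ℂ) * z‖ ≤ 2 * (1 - r) := by
    have heq : a - (r:ℂ) * z = (a - z) + ((1:ℂ) - (r:ℂ)) * z := by ring
    rw [heq]
    refine le_trans (norm_add_le _ _) ?_
    have h2 : ‖((1:ℂ) - (r:ℂ)) * z‖ = 1 - r := by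
      rw [norm_mul, hz, mul_one, h1rc]
    have h3 : ‖a - z‖ ≤ 1 - r := by
      rwa [norm_sub_rev]
    linarith
  have hlo : 1 - r ≤ ‖a - (r:ℂ) * z‖ := by
    have h6 : ‖a‖ ≤ ‖a - (r:ℂ) * z‖ + r := by
      calc ‖a‖ = ‖(a - (r:ℂ) * z) + (r:ℂ) * z‖ := by
            rw [sub_add_cancel]
        _ ≤ ‖a - (r:ℂ) * z‖ + ‖(r:ℂ) * z‖ := norm_add_le _ _
        _ = ‖a - (r:ℂ) * z‖ + r := by rw [hrz]
    rw [ha] at h6; linarith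
  have habs_u : ‖uar a r z‖
      = ((1 - r) / ‖a - (r:ℂ) * z‖)^2 := by
    rw [uar, norm_pow, norm_div, habs_den, h1rc]
  rw [habs_u]
  have hdpos : 0 < ‖a - (r:ℂ) * z‖ := lt_of_lt_of_le h1r hlo
  have hq : (1:ℝ)/2 ≤ (1 - r) / ‖a - (r:ℂ) * z‖ := by
    rw [le_div_iff₀ hdpos]
    linarith
  calc (1:ℝ)/4 = (1/2)^2 := by norm_num
    _ ≤ ((1 - r) / ‖a - (r:ℂ) * z‖)^2 := by
        apply pow_le_pow_left₀ (by norm_num) hq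

/-- Lower bound for the Luxemburg norm in terms of the measure of a level set. -/
lemma luxNorm_lb {α : Type*} [MeasurableSpace α] {μ : MeasureTheory.Measure α}
    {Ψ Ψinv : ℝ → ℝ}
    (hΨ0 : Ψ 0 = 0)
    (hΨmono : StrictMonoOn Ψ (Set.Ici 0))
    (hΨinv2 : ∀ y, 0 ≤ y → Ψ (Ψinv y) = y)
    (hΨinv0 : ∀ y, 0 ≤ y → 0 ≤ Ψinv y)
    {f : α → ℂ} {δ η : ℝ} (hδ : 0 < δ) (hη : 0 < η)
    (hmeas : Measurable fun w => ‖f w‖)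
    (hbig : ENNReal.ofReal η ≤ μ {w | δ ≤ ‖f w‖}) :
    ENNReal.ofReal (δ / Ψinv (1/η)) ≤ luxNorm Ψ μ f := by
  have hinvpos : 0 < Ψinv (1/η) := by
    rcases (hΨinv0 _ (by positivity : (0:ℝ) ≤ 1/η)).lt_or_eq with h | h
    · exact h
    · exfalso
      have h2 := hΨinv2 (1/η) (by positivity)
      rw [← h, hΨ0] at h2
      have : (0:ℝ) < 1/η := by positivity
      linarith
  apply le_sInf
  rintro C ⟨c, hc, rfl, hint⟩
  apply ENNReal.ofReal_le_ofReal
  set G := {w | δ ≤ ‖f w‖} with hGdef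
  have hGmeas : MeasurableSet G := measurableSet_le measurable_const hmeas
  have hΨnonneg : 0 ≤ Ψ (δ / c) := by
    have h := hΨmono.monotoneOn (Set.mem_Ici.mpr le_rfl)
      (Set.mem_Ici.mpr (by positivity : (0:ℝ) ≤ δ / c)) (by positivity : (0:ℝ) ≤ δ / c)
    rwa [hΨ0] at h
  have key : ENNReal.ofReal (Ψ (δ/c)) * μ G ≤ 1 := by
    have h1 : ENNReal.ofReal (Ψ (δ/c)) * μ G
        = ∫⁻ w, G.indicator (fun _ => ENNReal.ofReal (Ψ (δ/c))) w ∂μ := by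
      rw [lintegral_indicator hGmeas, setLIntegral_const]
    rw [h1]
    refine le_trans (lintegral_mono fun w => ?_) hint
    by_cases hw : w ∈ G
    · rw [Set.indicator_of_mem hw]
      apply ENNReal.ofReal_le_ofReal
      refine hΨmono.monotoneOn (Set.mem_Ici.mpr (by positivity))
        (Set.mem_Ici.mpr (by positivity)) ?_
      have hw' : δ ≤ ‖f w‖ := hw
      gcongr
    · rw [Set.indicator_of_notMem hw]; exact zero_le
  have h2 : Ψ (δ/c) * η ≤ 1 := by
    rw [← ENNReal.ofReal_le_one, ENNReal.ofReal_mul hΨnonneg]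
    exact le_trans (mul_le_mul_right hbig _) key
  have h3 : Ψ (δ/c) ≤ 1/η := (le_div_iff₀ hη).mpr h2
  have h4 : δ / c ≤ Ψinv (1/η) := by
    by_contra hcon
    push_neg at hcon
    have h5 := hΨmono (Set.mem_Ici.mpr (hΨinv0 _ (by positivity)))
      (Set.mem_Ici.mpr (by positivity : (0:ℝ) ≤ δ/c)) hcon
    rw [hΨinv2 _ (by positivity)] at h5
    linarith
  rw [div_le_iff₀ hc] at h4
  rw [div_le_iff₀ hinvpos]
  nlinarith [h4]

theorem stmt_4
    (Ψ Ψinv : ℝ → ℝ)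
    (hΨ0 : Ψ 0 = 0)
    (hΨmono : StrictMonoOn Ψ (Set.Ici 0))
    (hΨconv : StrictConvexOn ℝ (Set.Ici 0) Ψ)
    (hΨcont : ContinuousOn Ψ (Set.Ici 0))
    (hΨlim : Filter.Tendsto (fun x => Ψ x / x) Filter.atTop Filter.atTop)
    (hΨinv1 : ∀ x, 0 ≤ x → Ψinv (Ψ x) = x)
    (hΨinv2 : ∀ y, 0 ≤ y → Ψ (Ψinv y) = y)
    (hΨinv0 : ∀ y, 0 ≤ y → 0 ≤ Ψinv y)
    (φ : ℂ → ℂ) (hφmeas : Measurable φ)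
    (hφbd : ∀ w : ℂ, ‖w‖ = 1 → ‖φ w‖ ≤ 1)
    -- condition (W)
    (hW : Filter.Tendsto
      (fun r : ℝ => ENNReal.ofReal (Ψinv (1 / (1 - r))) *
        ⨆ a : {a : ℂ // ‖a‖ = 1},
          luxNorm Ψ circleMeasure (fun w => uar (a : ℂ) r (φ w)))
      (nhdsWithin 1 (Set.Iio 1)) (nhds 0)) :
    circleMeasure {w : ℂ | ‖φ w‖ = 1} = 0 := by
  classical
  by_contra hE0
  set E := {w : ℂ | ‖φ w‖ = 1} with hEdef
  have hπ := Real.pi_pos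
  -- total mass of the circle measure is 1
  have hmexp : Measurable fun t : ℝ => Complex.exp ((t:ℂ) * Complex.I) :=
    Complex.continuous_exp.measurable.comp (Complex.measurable_ofReal.mul_const _)
  have hμuniv : circleMeasure Set.univ = 1 := by
    rw [circleMeasure, Measure.smul_apply, Measure.map_apply hmexp MeasurableSet.univ,
      Set.preimage_univ, Measure.restrict_apply MeasurableSet.univ, Set.univ_inter,
      Real.volume_Ioc, smul_eq_mul, show (2 * Real.pi - 0 : ℝ) = 2 * Real.pi by ring]
    rw [ENNReal.inv_mul_cancel]
    · simp only [ne_eq, ENNReal.ofReal_eq_zero, not_le]; positivity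
    · exact ENNReal.ofReal_ne_top
  have hEle1 : circleMeasure E ≤ 1 := hμuniv ▸ measure_mono (Set.subset_univ E)
  have hEtop : circleMeasure E ≠ ⊤ := ne_top_of_le_ne_top ENNReal.one_ne_top hEle1
  set ε := (circleMeasure E).toReal with hεdef
  have hεpos : 0 < ε := ENNReal.toReal_pos hE0 hEtop
  have hε1 : ε ≤ 1 := by
    have h := ENNReal.toReal_mono ENNReal.one_ne_top hEle1
    simpa using h
  have hμE : circleMeasure E = ENNReal.ofReal ε := (ENNReal.ofReal_toReal hEtop).symm
  set K := 15 / ε with hKdef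
  have hKpos : 0 < K := by positivity
  have hK1 : 1 ≤ K := by rw [hKdef, le_div_iff₀ hεpos]; linarith
  -- properties of the inverse function
  have hinv_mono : ∀ x y : ℝ, 0 ≤ x → x ≤ y → Ψinv x ≤ Ψinv y := by
    intro x y hx hxy
    by_contra hcon
    push_neg at hcon
    have h := hΨmono (Set.mem_Ici.mpr (hΨinv0 y (hx.trans hxy)))
      (Set.mem_Ici.mpr (hΨinv0 x hx)) hcon
    rw [hΨinv2 x hx, hΨinv2 y (hx.trans hxy)] at h
    linarith
  have hinv_pos : ∀ y : ℝ, 0 < y → 0 < Ψinv y := by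
    intro y hy
    rcases (hΨinv0 y hy.le).lt_or_eq with h | h
    · exact h
    · exfalso
      have h2 := hΨinv2 y hy.le
      rw [← h, hΨ0] at h2
      linarith
  have hinv_submul : ∀ t : ℝ, 0 ≤ t → Ψinv (K * t) ≤ K * Ψinv t := by
    intro t ht
    have hx0 : 0 ≤ Ψinv t := hΨinv0 t ht
    have hconv := hΨconv.convexOn.2 (Set.mem_Ici.mpr (by positivity : (0:ℝ) ≤ K * Ψinv t))
      (Set.mem_Ici.mpr (le_refl (0:ℝ))) (by positivity : (0:ℝ) ≤ 1/K)
      (by rw [sub_nonneg]; exact div_le_one_of_le₀ hK1 hKpos.le : (0:ℝ) ≤ 1 - 1/K)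
      (by ring)
    simp only [smul_eq_mul, mul_zero, add_zero, hΨ0] at hconv
    have harg : 1/K * (K * Ψinv t) = Ψinv t := by field_simp
    rw [harg, hΨinv2 t ht] at hconv
    -- hconv : t ≤ 1/K * Ψ (K * Ψinv t)
    have h5 : K * t ≤ Ψ (K * Ψinv t) := by
      have h6 := mul_le_mul_of_nonneg_left hconv hKpos.le
      have h7 : K * (1/K * Ψ (K * Ψinv t)) = Ψ (K * Ψinv t) := by field_simp
      linarith
    calc Ψinv (K * t) ≤ Ψinv (Ψ (K * Ψinv t)) := hinv_mono _ _ (by positivity) h5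
      _ = K * Ψinv t := hΨinv1 _ (by positivity)
  -- the key lower bound for each r close to 1
  have key : ∀ r : ℝ, r ∈ Set.Ioo (0:ℝ) 1 →
      ENNReal.ofReal (1/(4*K)) ≤ ENNReal.ofReal (Ψinv (1 / (1 - r))) *
        ⨆ a : {a : ℂ // ‖a‖ = 1},
          luxNorm Ψ circleMeasure (fun w => uar (a : ℂ) r (φ w)) := by
    rintro r ⟨hr0, hr1⟩
    have h1r : 0 < 1 - r := by linarith
    set N := ⌈4 * Real.pi / (1 - r)⌉₊ with hNdef
    have hNpos : 0 < N := Nat.ceil_pos.mpr (by positivity)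
    have hNposR : (0:ℝ) < N := by exact_mod_cast hNpos
    have hNge : 4 * Real.pi / (1 - r) ≤ (N:ℝ) := Nat.le_ceil _
    have hNle : (N:ℝ) ≤ 15 / (1 - r) := by
      have h2 : (N:ℝ) < 4*Real.pi/(1-r) + 1 := Nat.ceil_lt_add_one (by positivity)
      have h3 : (1:ℝ) ≤ 1/(1-r) := by rw [le_div_iff₀ h1r]; linarith
      have hpi : Real.pi < 3.15 := Real.pi_lt_d2
      have h4 : 4*Real.pi/(1-r) ≤ 14/(1-r) := by gcongr; linarith
      have h5 : (14:ℝ)/(1-r) + 1/(1-r) = 15/(1-r) := by ring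
      linarith
    -- the arcs
    set S : ℕ → Set ℂ := fun k => {z : ℂ | Complex.arg z ∈
      Set.Ioc (-Real.pi + 2*Real.pi*k/N) (-Real.pi + 2*Real.pi*(k+1)/N)} with hSdef
    have hcover : E ⊆ ⋃ k ∈ Finset.range N, (E ∩ φ ⁻¹' S k) := by
      intro w hw
      set θ := Complex.arg (φ w) with hθdef
      have hθ1 : -Real.pi < θ := Complex.neg_pi_lt_arg _
      have hθ2 : θ ≤ Real.pi := Complex.arg_le_pi _
      have hx0 : 0 < θ + Real.pi := by linarith
      set c := ⌈(θ + Real.pi) * N / (2*Real.pi)⌉₊ with hcdef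
      have hc1 : 0 < c := Nat.ceil_pos.mpr (by positivity)
      have hcN : c ≤ N := by
        apply Nat.ceil_le.mpr
        rw [div_le_iff₀ (by positivity : (0:ℝ) < 2*Real.pi)]
        nlinarith [hNposR]
      set k := c - 1 with hkdef
      have hkN : k < N := by omega
      have hck : (c:ℝ) = (k:ℝ) + 1 := by
        have hcc : c = k + 1 := by omega
        rw [hcc]; push_cast; ring
      have hub : (θ + Real.pi) * N / (2*Real.pi) ≤ (k:ℝ) + 1 := by
        rw [← hck]; exact Nat.le_ceil _
      have hlb : (k:ℝ) < (θ + Real.pi) * N / (2*Real.pi) := by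
        have h7 := Nat.ceil_lt_add_one
          (show (0:ℝ) ≤ (θ + Real.pi) * N / (2*Real.pi) by positivity)
        rw [← hcdef, hck] at h7
        linarith
      simp only [Set.mem_iUnion, Finset.mem_range]
      refine ⟨k, hkN, hw, ?_⟩
      have hlow : 2*Real.pi*(k:ℝ)/N < θ + Real.pi := by
        rw [div_lt_iff₀ hNposR]
        have h6 : (k:ℝ) * (2*Real.pi) < (θ + Real.pi) * N :=
          (lt_div_iff₀ (by positivity : (0:ℝ) < 2*Real.pi)).mp hlb
        linarith
      have hhigh : θ + Real.pi ≤ 2*Real.pi*((k:ℝ)+1)/N := by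
        rw [le_div_iff₀ hNposR]
        have h6 : (θ + Real.pi) * N ≤ ((k:ℝ)+1) * (2*Real.pi) :=
          (div_le_iff₀ (by positivity : (0:ℝ) < 2*Real.pi)).mp hub
        linarith
      constructor
      · show -Real.pi + 2*Real.pi*(k:ℝ)/N < θ
        linarith
      · show θ ≤ -Real.pi + 2*Real.pi*((k:ℝ)+1)/N
        linarith
    -- pigeonhole
    have hsum : circleMeasure E ≤ ∑ k ∈ Finset.range N, circleMeasure (E ∩ φ ⁻¹' S k) :=
      (measure_mono hcover).trans (measure_biUnion_finset_le _ _)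
    have hfin : ∀ k : ℕ, circleMeasure (E ∩ φ ⁻¹' S k) ≠ ⊤ := fun k =>
      ne_top_of_le_ne_top ENNReal.one_ne_top (hμuniv ▸ measure_mono (Set.subset_univ _))
    obtain ⟨k, hkmem, hk⟩ : ∃ k ∈ Finset.range N,
        ENNReal.ofReal (ε / N) ≤ circleMeasure (E ∩ φ ⁻¹' S k) := by
      by_contra hcon
      push_neg at hcon
      have hlt : ∀ k ∈ Finset.range N,
          (circleMeasure (E ∩ φ ⁻¹' S k)).toReal < ε / N := fun k hkm =>
        (ENNReal.lt_ofReal_iff_toReal_lt (hfin k)).mp (hcon k hkm)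
      have hsumR : ε ≤ ∑ k ∈ Finset.range N, (circleMeasure (E ∩ φ ⁻¹' S k)).toReal := by
        rw [hεdef, ← ENNReal.toReal_sum (fun k _ => hfin k)]
        exact ENNReal.toReal_mono
          (ENNReal.sum_ne_top.mpr (fun k _ => hfin k)) hsum
      have hstrict : ∑ k ∈ Finset.range N, (circleMeasure (E ∩ φ ⁻¹' S k)).toReal
          < ∑ _k ∈ Finset.range N, ε / N :=
        Finset.sum_lt_sum_of_nonempty (Finset.nonempty_range_iff.mpr hNpos.ne') hlt
      rw [Finset.sum_const, Finset.card_range, nsmul_eq_mul] at hstrict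
      have hcanc : (N:ℝ) * (ε / N) = ε := by field_simp
      linarith
    -- the chosen point a on the circle
    set θa : ℝ := -Real.pi + 2*Real.pi*((k:ℝ)+1)/N with hθadef
    set a : ℂ := Complex.exp ((θa:ℂ) * Complex.I) with hadef
    have haabs : ‖a‖ = 1 := by
      rw [hadef, Complex.norm_exp]
      simp
    have hsubset : (E ∩ φ ⁻¹' S k) ⊆ {w | (1:ℝ)/4 ≤ ‖uar a r (φ w)‖} := by
      rintro w ⟨hwE, hwS⟩
      have hφw : ‖φ w‖ = 1 := hwE
      have hφexp : Complex.exp ((Complex.arg (φ w) : ℂ) * Complex.I) = φ w := by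
        have h := Complex.norm_mul_exp_arg_mul_I (φ w)
        rwa [hφw, Complex.ofReal_one, one_mul] at h
      set θ := Complex.arg (φ w) with hθdef
      have hwS' : θ ∈ Set.Ioc (-Real.pi + 2*Real.pi*(k:ℝ)/N)
          (-Real.pi + 2*Real.pi*((k:ℝ)+1)/N) := hwS
      obtain ⟨hlo, hhi⟩ := hwS'
      have harclen : -Real.pi + 2*Real.pi*(k:ℝ)/N = θa - 2*Real.pi/N := by
        rw [hθadef]; field_simp; ring
      have hposN : (0:ℝ) < 2*Real.pi/N := by positivity
      have hdist : |θ - θa| ≤ 2*Real.pi/N := by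
        rw [abs_le]
        constructor
        · rw [harclen] at hlo; linarith
        · have : θ ≤ θa := by rw [hθadef]; exact hhi
          linarith
      have hchord : ‖φ w - a‖ ≤ 1 - r := by
        calc ‖φ w - a‖
            = ‖Complex.exp ((θ:ℂ)*Complex.I) - Complex.exp ((θa:ℂ)*Complex.I)‖ := by
              rw [hφexp, hadef]
          _ ≤ 2 * |θ - θa| := chord_bound θ θa
          _ ≤ 2 * (2*Real.pi/N) := by linarith
          _ ≤ 1 - r := by
              rw [show (2:ℝ)*(2*Real.pi/N) = 4*Real.pi/N by ring, div_le_iff₀ hNposR]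
              have h8 : 4*Real.pi ≤ (N:ℝ) * (1-r) := (div_le_iff₀ h1r).mp hNge
              linarith [h8]
      exact uar_lb haabs hφw hr0.le hr1 hchord
    have hμG : ENNReal.ofReal (ε/N) ≤
        circleMeasure {w | (1:ℝ)/4 ≤ ‖uar a r (φ w)‖} := by
      exact hk.trans (measure_mono hsubset)
    have hmeasf : Measurable fun w => ‖uar a r (φ w)‖ := by
      have heq : (fun w => ‖uar a r (φ w)‖) = fun w =>
          (‖(1:ℂ) - (r:ℂ)‖ /
            ‖1 - (starRingEnd ℂ) a * (r:ℂ) * φ w‖)^2 := by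
        funext w; rw [uar, norm_pow, norm_div]
      rw [heq]
      exact ((measurable_const.div (continuous_norm.measurable.comp
        (measurable_const.sub (hφmeas.const_mul _)))).pow_const 2)
    have hη : (0:ℝ) < ε / N := by positivity
    have hlux := luxNorm_lb hΨ0 hΨmono hΨinv2 hΨinv0
      (by norm_num : (0:ℝ) < 1/4) hη hmeasf hμG
    rw [one_div_div] at hlux
    have hsup : ENNReal.ofReal ((1/4) / Ψinv ((N:ℝ)/ε)) ≤
        ⨆ b : {b : ℂ // ‖b‖ = 1},
          luxNorm Ψ circleMeasure (fun w => uar (b:ℂ) r (φ w)) :=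
      hlux.trans (le_iSup (fun b : {b : ℂ // ‖b‖ = 1} =>
        luxNorm Ψ circleMeasure (fun w => uar (b:ℂ) r (φ w))) ⟨a, haabs⟩)
    have ht0 : (0:ℝ) < 1/(1-r) := by positivity
    have hPt : 0 < Ψinv (1/(1-r)) := hinv_pos _ ht0
    have hNεKt : (N:ℝ)/ε ≤ K * (1/(1-r)) := by
      have h7 : K * (1/(1-r)) = (15/(1-r))/ε := by rw [hKdef]; ring
      rw [h7]
      gcongr
    have hQle : Ψinv ((N:ℝ)/ε) ≤ K * Ψinv (1/(1-r)) :=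
      (hinv_mono _ _ (by positivity) hNεKt).trans (hinv_submul _ ht0.le)
    have hQpos : 0 < Ψinv ((N:ℝ)/ε) := hinv_pos _ (by positivity)
    have hreal : 1/(4*K) ≤ Ψinv (1/(1-r)) * ((1/4) / Ψinv ((N:ℝ)/ε)) := by
      have h8 : Ψinv (1/(1-r)) * ((1/4) / (K * Ψinv (1/(1-r)))) = 1/(4*K) := by
        field_simp
      have h9 : (1/4:ℝ) / (K * Ψinv (1/(1-r))) ≤ (1/4) / Ψinv ((N:ℝ)/ε) := by
        apply div_le_div_of_nonneg_left (by norm_num) hQpos hQle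
      calc 1/(4*K) = Ψinv (1/(1-r)) * ((1/4)/(K * Ψinv (1/(1-r)))) := h8.symm
        _ ≤ Ψinv (1/(1-r)) * ((1/4)/Ψinv ((N:ℝ)/ε)) :=
            mul_le_mul_of_nonneg_left h9 hPt.le
    calc ENNReal.ofReal (1/(4*K))
        ≤ ENNReal.ofReal (Ψinv (1/(1-r)) * ((1/4)/Ψinv ((N:ℝ)/ε))) :=
          ENNReal.ofReal_le_ofReal hreal
      _ = ENNReal.ofReal (Ψinv (1/(1-r))) * ENNReal.ofReal ((1/4)/Ψinv ((N:ℝ)/ε)) :=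
          ENNReal.ofReal_mul hPt.le
      _ ≤ ENNReal.ofReal (Ψinv (1/(1-r))) *
          ⨆ b : {b : ℂ // ‖b‖ = 1},
            luxNorm Ψ circleMeasure (fun w => uar (b:ℂ) r (φ w)) :=
          mul_le_mul_right hsup _
  -- derive the contradiction from condition (W)
  have hconst : (0:ENNReal) < ENNReal.ofReal (1/(4*K)) := by
    rw [ENNReal.ofReal_pos]; positivity
  have hev1 := hW.eventually_lt_const hconst
  have hev2 : ∀ᶠ r in nhdsWithin (1:ℝ) (Set.Iio 1), r ∈ Set.Ioo (0:ℝ) 1 :=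
    Ioo_mem_nhdsLT_of_mem (by constructor <;> norm_num : (1:ℝ) ∈ Set.Ioc 0 1)
  obtain ⟨r, hlt, hmem⟩ := (hev1.and hev2).exists
  exact absurd (key r hmem) (not_le.mpr hlt)
end

section
/- Let Ψ be an Orlicz function satisfying condition Δ², and let φ : 𝕋 → ℂ be measurable with |φ(w)| ≤ 1 for all w ∈ 𝕋. If condition (W) holds, then for every A > 0 one has m({w ∈ 𝕋 : 1−|φ(w)| < λ}) = O( 1/Ψ(A·Ψ⁻¹(1/λ)) ) as λ → 0⁺; that is, there exist K > 0 and λ₀ ∈ (0,1) such that m({w ∈ 𝕋 : 1−|φ(w)| < λ}) ≤ K/Ψ(A·Ψ⁻¹(1/λ)) for all 0 < λ < λ₀. -/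
open MeasureTheory

lemma orlicz_chord_le (s t : ℝ) :
    ‖Complex.exp (s * Complex.I) - Complex.exp (t * Complex.I)‖ ≤ |s - t| := by
  have h1 : Complex.exp (s * Complex.I) - Complex.exp (t * Complex.I)
      = Complex.exp (t * Complex.I) * (Complex.exp (((s - t) : ℝ) * Complex.I) - 1) := by
    rw [mul_sub, ← Complex.exp_add]; push_cast; ring_nf
  rw [h1, norm_mul, Complex.norm_exp_ofReal_mul_I, one_mul]
  set θ := s - t with hθ
  clear_value θ
  have h2 : ‖Complex.exp ((θ:ℂ) * Complex.I) - 1‖ = Real.sqrt (2 - 2 * Real.cos θ) := by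
    rw [Complex.norm_def, Complex.normSq_apply]
    simp only [Complex.sub_re, Complex.sub_im, Complex.one_re, Complex.one_im,
      Complex.exp_ofReal_mul_I_re, Complex.exp_ofReal_mul_I_im]
    congr 1
    have := Real.sin_sq_add_cos_sq θ
    ring_nf
    nlinarith [Real.sin_sq_add_cos_sq θ]
  rw [h2]
  have h3 : 2 - 2 * Real.cos θ ≤ θ ^ 2 := by
    have h4 : Real.cos θ = 1 - 2 * Real.sin (θ/2) ^ 2 := by
      have h := Real.cos_two_mul (θ/2)
      rw [show 2*(θ/2) = θ by ring] at h
      have := Real.sin_sq_add_cos_sq (θ/2)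
      nlinarith
    have h5 : |Real.sin (θ/2)| ≤ |θ/2| := Real.abs_sin_le_abs
    have h6 := mul_self_le_mul_self (abs_nonneg (Real.sin (θ/2))) h5
    rw [abs_mul_abs_self, abs_mul_abs_self, ← pow_two, ← pow_two] at h6
    nlinarith
  calc Real.sqrt (2 - 2 * Real.cos θ) ≤ Real.sqrt (θ^2) := Real.sqrt_le_sqrt h3
    _ = |θ| := by rw [Real.sqrt_sq_eq_abs]

lemma orlicz_net_lemma (lam : ℝ) (hl : 0 < lam) (z : ℂ) (hz : ‖z‖ = 1) :
    ∃ j : ℕ, j < ⌈2*Real.pi/lam⌉₊ ∧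
      ‖z - Complex.exp (((j : ℝ)*lam : ℝ) * Complex.I)‖ ≤ lam := by
  have hzexp : Complex.exp ((Complex.arg z : ℝ) * Complex.I) = z := by
    have := Complex.norm_mul_exp_arg_mul_I z
    rwa [hz, Complex.ofReal_one, one_mul] at this
  set θ0 := Complex.arg z with hθ0
  set θ : ℝ := if θ0 < 0 then θ0 + 2*Real.pi else θ0 with hθ
  have hπ := Real.pi_pos
  have harg1 := Complex.arg_le_pi z
  have harg2 := Complex.neg_pi_lt_arg z
  have hθnn : 0 ≤ θ := by
    rw [hθ]; split_ifs with h
    · linarith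
    · linarith
  have hθlt : θ < 2*Real.pi := by
    rw [hθ]; split_ifs with h
    · linarith
    · linarith
  have hzθ : Complex.exp ((θ : ℝ) * Complex.I) = z := by
    rw [hθ]; split_ifs with h
    · push_cast
      rw [add_mul, Complex.exp_add, Complex.exp_two_pi_mul_I, mul_one]
      exact hzexp
    · exact hzexp
  refine ⟨⌊θ/lam⌋₊, ?_, ?_⟩
  · rw [Nat.lt_ceil]
    calc ((⌊θ/lam⌋₊ : ℝ)) ≤ θ/lam := Nat.floor_le (by positivity)
      _ < 2*Real.pi/lam := by apply div_lt_div_of_pos_right hθlt hl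
  · rw [← hzθ]
    calc ‖Complex.exp ((θ:ℝ) * Complex.I)
          - Complex.exp (((⌊θ/lam⌋₊ : ℝ)*lam : ℝ) * Complex.I)‖
        ≤ |θ - (⌊θ/lam⌋₊ : ℝ)*lam| := orlicz_chord_le _ _
      _ ≤ lam := by
          rw [abs_le]
          constructor
          · have h1 : ((⌊θ/lam⌋₊ : ℝ)) ≤ θ/lam := Nat.floor_le (by positivity)
            have := (le_div_iff₀ hl).mp h1
            nlinarith
          · have h2 : θ/lam < (⌊θ/lam⌋₊ : ℝ) + 1 := Nat.lt_floor_add_one _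
            have := (div_lt_iff₀ hl).mp h2
            nlinarith

lemma orlicz_circleMeasure_off_circle : circleMeasure {w : ℂ | ‖w‖ ≠ 1} = 0 := by
  have hmeas : Measurable (fun t : ℝ => Complex.exp (t * Complex.I)) := by
    fun_prop
  have hset : MeasurableSet {w : ℂ | ‖w‖ ≠ 1} :=
    ((isClosed_eq continuous_norm continuous_const).measurableSet).compl
  rw [circleMeasure, Measure.smul_apply, Measure.map_apply hmeas hset]
  have : (fun t : ℝ => Complex.exp (t * Complex.I)) ⁻¹' {w : ℂ | ‖w‖ ≠ 1} = ∅ := by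
    ext t
    simp [Complex.norm_exp_ofReal_mul_I]
  rw [this]
  simp

lemma orlicz_cheb (Ψ : ℝ → ℝ) (hmono : MonotoneOn Ψ (Set.Ici 0))
    (f : ℂ → ℂ) (hf : Measurable f) (c : ℝ) (hc : 0 < c)
    (hint : (∫⁻ w, ENNReal.ofReal (Ψ (‖f w‖ / c)) ∂circleMeasure) ≤ 1)
    (hpos : 0 < Ψ (1/(9*c))) :
    circleMeasure {w : ℂ | 1/9 ≤ ‖f w‖}
      ≤ (ENNReal.ofReal (Ψ (1/(9*c))))⁻¹ := by
  set Ψ' : ℝ → ℝ := fun x => Ψ (max x 0) with hΨ'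
  have hΨ'mono : Monotone Ψ' := fun x y hxy =>
    hmono (Set.mem_Ici.mpr (le_max_right _ _)) (Set.mem_Ici.mpr (le_max_right _ _))
      (max_le_max hxy le_rfl)
  set g : ℂ → ENNReal := fun w => ENNReal.ofReal (Ψ' (‖f w‖ / c)) with hg
  have hgmeas : Measurable g := by
    apply ENNReal.measurable_ofReal.comp
    apply hΨ'mono.measurable.comp
    exact (continuous_norm.measurable.comp hf).div_const c
  have hsub : {w : ℂ | 1/9 ≤ ‖f w‖}
      ⊆ {w : ℂ | ENNReal.ofReal (Ψ (1/(9*c))) ≤ g w} := by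
    intro w hw
    simp only [Set.mem_setOf_eq] at hw ⊢
    apply ENNReal.ofReal_le_ofReal
    have h1 : 1/(9*c) ≤ ‖f w‖ / c := by
      have : 1/(9*c) = (1/9)/c := by ring
      rw [this]
      gcongr
    have h2 : Ψ' (‖f w‖ / c) = Ψ (‖f w‖ / c) := by
      rw [hΨ']; simp only []
      rw [max_eq_left (by positivity)]
    rw [h2]
    exact hmono (Set.mem_Ici.mpr (by positivity)) (Set.mem_Ici.mpr (by positivity)) h1
  have hε0 : (ENNReal.ofReal (Ψ (1/(9*c)))) ≠ 0 := (ENNReal.ofReal_pos.mpr hpos).ne'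
  have hεtop : (ENNReal.ofReal (Ψ (1/(9*c)))) ≠ ⊤ := ENNReal.ofReal_ne_top
  calc circleMeasure {w : ℂ | 1/9 ≤ ‖f w‖}
      ≤ circleMeasure {w : ℂ | ENNReal.ofReal (Ψ (1/(9*c))) ≤ g w} := measure_mono hsub
    _ ≤ (∫⁻ w, g w ∂circleMeasure) / ENNReal.ofReal (Ψ (1/(9*c))) :=
        meas_ge_le_lintegral_div hgmeas.aemeasurable hε0 hεtop
    _ ≤ 1 / ENNReal.ofReal (Ψ (1/(9*c))) := by
        apply ENNReal.div_le_div_right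
        calc (∫⁻ w, g w ∂circleMeasure)
            = ∫⁻ w, ENNReal.ofReal (Ψ (‖f w‖ / c)) ∂circleMeasure := by
              apply lintegral_congr
              intro w
              rw [hg]; simp only []
              congr 1
              rw [hΨ']; simp only []
              rw [max_eq_left (by positivity)]
          _ ≤ 1 := hint
    _ = (ENNReal.ofReal (Ψ (1/(9*c))))⁻¹ := one_div _
set_option maxHeartbeats 2000000 in
theorem stmt_5
    (Ψ Ψinv : ℝ → ℝ)
    (hΨ0 : Ψ 0 = 0)
    (hΨmono : StrictMonoOn Ψ (Set.Ici 0))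
    (hΨconv : StrictConvexOn ℝ (Set.Ici 0) Ψ)
    (hΨcont : ContinuousOn Ψ (Set.Ici 0))
    (hΨlim : Filter.Tendsto (fun x => Ψ x / x) Filter.atTop Filter.atTop)
    (hΨinv1 : ∀ x, 0 ≤ x → Ψinv (Ψ x) = x)
    (hΨinv2 : ∀ y, 0 ≤ y → Ψ (Ψinv y) = y)
    (hΨinv0 : ∀ y, 0 ≤ y → 0 ≤ Ψinv y)
    -- condition Δ²
    (hΔ2 : ∃ α > (1 : ℝ), ∃ x₀ > (0 : ℝ), ∀ x ≥ x₀, (Ψ x) ^ 2 ≤ Ψ (α * x))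
    (φ : ℂ → ℂ) (hφmeas : Measurable φ)
    (hφbd : ∀ w : ℂ, ‖w‖ = 1 → ‖φ w‖ ≤ 1)
    -- condition (W)
    (hW : Filter.Tendsto
      (fun r : ℝ => ENNReal.ofReal (Ψinv (1 / (1 - r))) *
        ⨆ a : {a : ℂ // ‖a‖ = 1},
          luxNorm Ψ circleMeasure (fun w => uar (a : ℂ) r (φ w)))
      (nhdsWithin 1 (Set.Iio 1)) (nhds 0)) :
    ∀ A > (0 : ℝ), ∃ K > (0 : ℝ), ∃ lam₀ : ℝ, 0 < lam₀ ∧ lam₀ < 1 ∧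
      ∀ lam : ℝ, 0 < lam → lam < lam₀ →
        circleMeasure {w : ℂ | 1 - ‖φ w‖ < lam}
          ≤ ENNReal.ofReal (K / Ψ (A * Ψinv (1 / lam))) := by
  intro A hA
  obtain ⟨α, hα, x₀, hx₀, hΔ⟩ := hΔ2
  set B := max A 1 with hB
  have hB1 : (1:ℝ) ≤ B := le_max_right _ _
  have hAB : A ≤ B := le_max_left _ _
  have hB0 : (0:ℝ) < B := lt_of_lt_of_le one_pos hB1
  have hα0 : (0:ℝ) < α := lt_trans one_pos hα
  set δ := 1/(18*α*B) with hδdef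
  have hδ : 0 < δ := by rw [hδdef]; positivity
  have hΨmonoOn : MonotoneOn Ψ (Set.Ici 0) := hΨmono.monotoneOn
  have hΨnn : ∀ x : ℝ, 0 ≤ x → 0 ≤ Ψ x := fun x hx => by
    rw [← hΨ0]
    exact hΨmonoOn (Set.mem_Ici.mpr le_rfl) (Set.mem_Ici.mpr hx) hx
  have hΨpos : ∀ x : ℝ, 0 < x → 0 < Ψ x := fun x hx => by
    rw [← hΨ0]
    exact hΨmono (Set.mem_Ici.mpr le_rfl) (Set.mem_Ici.mpr hx.le) hx
  have hev : ∀ᶠ r in nhdsWithin (1:ℝ) (Set.Iio 1),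
      (ENNReal.ofReal (Ψinv (1 / (1 - r))) *
        ⨆ a : {a : ℂ // ‖a‖ = 1},
          luxNorm Ψ circleMeasure (fun w => uar (a : ℂ) r (φ w))) < ENNReal.ofReal δ :=
    hW.eventually_lt_const (ENNReal.ofReal_pos.mpr hδ)
  rw [Filter.eventually_iff, mem_nhdsLT_iff_exists_Ioo_subset] at hev
  obtain ⟨r₀, hr₀, hsubs⟩ := hev
  rw [Set.mem_Iio] at hr₀
  set M := max x₀ 1 with hM
  have hM1 : (1:ℝ) ≤ M := le_max_right _ _
  have hM0 : (0:ℝ) < M := lt_of_lt_of_le one_pos hM1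
  have hΨM : 0 < Ψ M := hΨpos M hM0
  refine ⟨8, by norm_num, min (1 - r₀) (min (1/Ψ M) (1/2)), ?_, ?_, ?_⟩
  · apply lt_min (by linarith)
    apply lt_min (by positivity) (by norm_num)
  · exact lt_of_le_of_lt ((min_le_right _ _).trans (min_le_right _ _)) (by norm_num)
  intro lam hlam hlamlt
  have hlam1 : lam < 1 - r₀ := lt_of_lt_of_le hlamlt (min_le_left _ _)
  have hlam2 : lam < 1/Ψ M :=
    lt_of_lt_of_le hlamlt ((min_le_right _ _).trans (min_le_left _ _))
  have hlam3 : lam < 1/2 :=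
    lt_of_lt_of_le hlamlt ((min_le_right _ _).trans (min_le_right _ _))
  have hlamlt1 : lam < 1 := by linarith
  have hF := hsubs (show (1:ℝ) - lam ∈ Set.Ioo r₀ 1 from Set.mem_Ioo.mpr ⟨by linarith, by linarith⟩)
  simp only [Set.mem_setOf_eq] at hF
  rw [show (1:ℝ) - (1 - lam) = lam from by ring] at hF
  set t := Ψinv (1/lam) with htdef
  have h1lam : (0:ℝ) < 1/lam := by positivity
  have hΨMlt : Ψ M < 1/lam := by
    rw [lt_div_iff₀ hlam]
    have := (lt_div_iff₀ hΨM).mp hlam2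
    nlinarith
  have htM : M < t := by
    by_contra h
    push_neg at h
    have := hΨmonoOn (Set.mem_Ici.mpr (hΨinv0 _ h1lam.le)) (Set.mem_Ici.mpr hM0.le) h
    rw [hΨinv2 _ h1lam.le] at this
    linarith
  have ht0 : (0:ℝ) < t := lt_trans hM0 htM
  have htx₀ : x₀ ≤ t := le_trans (le_max_left _ _) htM.le
  have hΨt : Ψ t = 1/lam := hΨinv2 _ h1lam.le
  set N := ⌈2*Real.pi/lam⌉₊ with hN
  -- per-point Chebyshev bound
  have key : ∀ j : ℕ,
      circleMeasure {w : ℂ | 1/9 ≤ ‖uar (Complex.exp (((j:ℝ)*lam : ℝ) * Complex.I)) (1-lam) (φ w)‖}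
        ≤ (ENNReal.ofReal (Ψ (α*(B*t))))⁻¹ := by
    intro j
    set a : ℂ := Complex.exp (((j:ℝ)*lam : ℝ) * Complex.I) with ha_def
    have ha : ‖a‖ = 1 := Complex.norm_exp_ofReal_mul_I _
    have hle : luxNorm Ψ circleMeasure (fun w => uar a (1-lam) (φ w))
        ≤ ⨆ a' : {a : ℂ // ‖a‖ = 1},
            luxNorm Ψ circleMeasure (fun w => uar (a' : ℂ) (1-lam) (φ w)) :=
      le_iSup (fun a' : {a : ℂ // ‖a‖ = 1} =>
        luxNorm Ψ circleMeasure (fun w => uar (a' : ℂ) (1-lam) (φ w))) ⟨a, ha⟩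
    have hprod : ENNReal.ofReal t *
        luxNorm Ψ circleMeasure (fun w => uar a (1-lam) (φ w)) < ENNReal.ofReal δ :=
      lt_of_le_of_lt (mul_le_mul_right hle _) hF
    have hlux : luxNorm Ψ circleMeasure (fun w => uar a (1-lam) (φ w))
        < ENNReal.ofReal (2*δ/t) := by
      by_contra h
      push_neg at h
      have h2 : ENNReal.ofReal t * ENNReal.ofReal (2*δ/t)
          ≤ ENNReal.ofReal t * luxNorm Ψ circleMeasure (fun w => uar a (1-lam) (φ w)) :=
        mul_le_mul_right h _
      rw [← ENNReal.ofReal_mul ht0.le,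
        show t * (2*δ/t) = 2*δ from by field_simp] at h2
      have h3 : ENNReal.ofReal (2*δ) < ENNReal.ofReal δ := lt_of_le_of_lt h2 hprod
      have h4 : ENNReal.ofReal δ ≤ ENNReal.ofReal (2*δ) :=
        ENNReal.ofReal_le_ofReal (by linarith)
      exact absurd h3 (not_lt.mpr h4)
    rw [luxNorm] at hlux
    obtain ⟨C, hC, hClt⟩ := sInf_lt_iff.mp hlux
    obtain ⟨c, hc0, hCeq, hcint⟩ := hC
    rw [hCeq] at hClt
    have hct : c < 2*δ/t := (ENNReal.ofReal_lt_ofReal_iff (by positivity)).mp hClt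
    have hmeas_u : Measurable (fun w => uar a (1-lam) (φ w)) := by
      unfold uar
      fun_prop
    have hcheb := orlicz_cheb Ψ hΨmonoOn _ hmeas_u c hc0 hcint
      (hΨpos _ (by positivity))
    refine le_trans hcheb ?_
    apply ENNReal.inv_le_inv'
    apply ENNReal.ofReal_le_ofReal
    apply hΨmonoOn (Set.mem_Ici.mpr (by positivity)) (Set.mem_Ici.mpr (by positivity))
    have h9c : (0:ℝ) < 9*c := by linarith
    rw [le_div_iff₀ h9c]
    have hstep : α*(B*t)*(9*c) ≤ α*(B*t)*(9*(2*δ/t)) := by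
      have h99 : (9:ℝ)*c ≤ 9*(2*δ/t) := by nlinarith
      exact mul_le_mul_of_nonneg_left h99 (by positivity)
    calc α*(B*t)*(9*c) ≤ α*(B*t)*(9*(2*δ/t)) := hstep
      _ = 1*1 := by
          rw [hδdef]
          field_simp
          ring
      _ = 1 := by norm_num
  -- covering
  have hcover : {w : ℂ | 1 - ‖φ w‖ < lam} ∩ {w : ℂ | ‖w‖ = 1}
      ⊆ ⋃ j ∈ Finset.range N, {w : ℂ | 1/9 ≤ ‖uar (Complex.exp (((j:ℝ)*lam : ℝ) * Complex.I)) (1-lam) (φ w)‖} := by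
    rintro w ⟨hw1, hw2⟩
    simp only [Set.mem_setOf_eq] at hw1 hw2
    have hφle : ‖φ w‖ ≤ 1 := hφbd w hw2
    have hφpos : 0 < ‖φ w‖ := by linarith
    set z : ℂ := φ w / ((‖φ w‖ : ℝ) : ℂ) with hz
    have hzabs : ‖z‖ = 1 := by
      rw [hz, norm_div, Complex.norm_real, Real.norm_eq_abs, abs_of_pos hφpos, div_self hφpos.ne']
    obtain ⟨j, hjN, hjz⟩ := orlicz_net_lemma lam hlam z hzabs
    refine Set.mem_biUnion (Finset.mem_range.mpr hjN) ?_
    simp only [Set.mem_setOf_eq]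
    set aj : ℂ := Complex.exp (((j:ℝ)*lam : ℝ) * Complex.I) with haj
    have hajabs : ‖aj‖ = 1 := Complex.norm_exp_ofReal_mul_I _
    set x : ℝ := ‖φ w‖ with hx
    set den : ℂ := 1 - (starRingEnd ℂ) aj * (((1-lam : ℝ)) : ℂ) * φ w with hden
    have hdeq : ‖den‖ = ‖aj - (((1-lam:ℝ)) : ℂ) * φ w‖ := by
      have h1conj : (starRingEnd ℂ) aj * aj = 1 := by
        rw [mul_comm, Complex.mul_conj, Complex.normSq_eq_norm_sq, hajabs]
        norm_num
      have hconj : den = (starRingEnd ℂ) aj * (aj - (((1-lam:ℝ)) : ℂ) * φ w) := by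
        rw [hden, mul_sub, h1conj]
        ring
      rw [hconj, norm_mul, Complex.norm_conj, hajabs, one_mul]
    have hzsub : ‖z - (((1-lam:ℝ)) : ℂ) * φ w‖ ≤ 2*lam := by
      have heq : z - (((1-lam:ℝ)) : ℂ) * φ w
          = φ w * (((x⁻¹ - (1-lam) : ℝ)) : ℂ) := by
        have hxne : (x:ℂ) ≠ 0 := by
          exact_mod_cast hφpos.ne'
        rw [hz]
        push_cast
        field_simp
      rw [heq, norm_mul, Complex.norm_real, Real.norm_eq_abs, ← hx]
      have hxinv : (1:ℝ) ≤ x⁻¹ := by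
        rw [le_inv_comm₀ one_pos hφpos]
        simpa using hφle
      rw [abs_of_nonneg (by linarith)]
      have : x * (x⁻¹ - (1-lam)) = 1 - (1-lam)*x := by field_simp
      rw [this]
      nlinarith
    have hjz' : ‖aj - z‖ ≤ lam := by
      rw [norm_sub_rev]
      exact hjz
    have hd_ub : ‖den‖ ≤ 3*lam := by
      rw [hdeq]
      calc ‖aj - (((1-lam:ℝ)) : ℂ) * φ w‖
          = ‖(aj - z) + (z - (((1-lam:ℝ)) : ℂ) * φ w)‖ := by ring_nf
        _ ≤ ‖aj - z‖ + ‖z - (((1-lam:ℝ)) : ℂ) * φ w‖ :=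
            norm_add_le _ _
        _ ≤ lam + 2*lam := add_le_add hjz' hzsub
        _ = 3*lam := by ring
    have hd_lb : lam ≤ ‖den‖ := by
      have h1 : (1:ℝ) = ‖den + (starRingEnd ℂ) aj * (((1-lam:ℝ)) : ℂ) * φ w‖ := by
        rw [hden]
        norm_num
      have h2 : ‖(starRingEnd ℂ) aj * (((1-lam:ℝ)) : ℂ) * φ w‖
          = (1-lam) * x := by
        rw [norm_mul, norm_mul, Complex.norm_conj, hajabs, one_mul, Complex.norm_real, Real.norm_eq_abs,
          abs_of_nonneg (by linarith), ← hx]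
      have h3 := norm_add_le den ((starRingEnd ℂ) aj * (((1-lam:ℝ)) : ℂ) * φ w)
      rw [← h1, h2] at h3
      nlinarith
    have hd_pos : 0 < ‖den‖ := lt_of_lt_of_le hlam hd_lb
    have habs_num : ‖(1:ℂ) - (((1-lam:ℝ)) : ℂ)‖ = lam := by
      rw [show (1:ℂ) - (((1-lam:ℝ)) : ℂ) = ((lam : ℝ) : ℂ) from by push_cast; ring,
        Complex.norm_real, Real.norm_eq_abs, abs_of_pos hlam]
    have huar : ‖uar aj (1-lam) (φ w)‖
        = (lam / ‖den‖)^2 := by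
      rw [uar, norm_pow, norm_div, habs_num, hden]
    rw [huar]
    have h13 : (1:ℝ)/3 ≤ lam / ‖den‖ := by
      rw [div_le_div_iff₀ (by norm_num) hd_pos]
      linarith
    calc (1:ℝ)/9 = (1/3)^2 := by norm_num
      _ ≤ (lam / ‖den‖)^2 := by
          apply pow_le_pow_left₀ (by norm_num) h13
  -- count and sum
  have hNle : (N:ℝ) ≤ 8/lam := by
    have hceil := Nat.ceil_lt_add_one (show (0:ℝ) ≤ 2*Real.pi/lam by positivity)
    have hπlt : Real.pi < 3.15 := Real.pi_lt_d2
    have heq : 2*Real.pi/lam + 1 = (2*Real.pi + lam)/lam := by field_simp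
    have hle8 : (2*Real.pi + lam)/lam ≤ 8/lam := by
      gcongr
      linarith
    rw [hN]
    apply le_of_lt
    calc ((⌈2*Real.pi/lam⌉₊ : ℝ)) < 2*Real.pi/lam + 1 := hceil
      _ = (2*Real.pi + lam)/lam := heq
      _ ≤ 8/lam := hle8
  have hX : 0 < Ψ (α*(B*t)) := hΨpos _ (by positivity)
  have hY : 0 < Ψ (A*t) := hΨpos _ (by positivity)
  calc circleMeasure {w : ℂ | 1 - ‖φ w‖ < lam}
      ≤ circleMeasure (({w : ℂ | 1 - ‖φ w‖ < lam} ∩ {w : ℂ | ‖w‖ = 1})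
          ∪ {w : ℂ | ‖w‖ ≠ 1}) := by
        apply measure_mono
        intro w hw
        by_cases h : ‖w‖ = 1
        · exact Or.inl ⟨hw, h⟩
        · exact Or.inr h
    _ ≤ circleMeasure ({w : ℂ | 1 - ‖φ w‖ < lam} ∩ {w : ℂ | ‖w‖ = 1})
          + circleMeasure {w : ℂ | ‖w‖ ≠ 1} := measure_union_le _ _
    _ = circleMeasure ({w : ℂ | 1 - ‖φ w‖ < lam} ∩ {w : ℂ | ‖w‖ = 1}) := by
        rw [orlicz_circleMeasure_off_circle, add_zero]
    _ ≤ circleMeasure (⋃ j ∈ Finset.range N, {w : ℂ | 1/9 ≤ ‖uar (Complex.exp (((j:ℝ)*lam : ℝ) * Complex.I)) (1-lam) (φ w)‖}) :=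
        measure_mono hcover
    _ ≤ ∑ j ∈ Finset.range N, circleMeasure {w : ℂ | 1/9 ≤ ‖uar (Complex.exp (((j:ℝ)*lam : ℝ) * Complex.I)) (1-lam) (φ w)‖} :=
        measure_biUnion_finset_le _ _
    _ ≤ ∑ _j ∈ Finset.range N, (ENNReal.ofReal (Ψ (α*(B*t))))⁻¹ :=
        Finset.sum_le_sum (fun j _ => key j)
    _ = (N : ENNReal) * (ENNReal.ofReal (Ψ (α*(B*t))))⁻¹ := by
        rw [Finset.sum_const, Finset.card_range, nsmul_eq_mul]
    _ ≤ ENNReal.ofReal (8/lam) * (ENNReal.ofReal (Ψ (α*(B*t))))⁻¹ := by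
        apply mul_le_mul_left
        rw [← ENNReal.ofReal_natCast N]
        exact ENNReal.ofReal_le_ofReal hNle
    _ ≤ ENNReal.ofReal (8 / Ψ (A * Ψinv (1/lam))) := by
        rw [← ENNReal.ofReal_inv_of_pos hX,
          ← ENNReal.ofReal_mul (show (0:ℝ) ≤ 8/lam by positivity)]
        apply ENNReal.ofReal_le_ofReal
        rw [← htdef]
        have hchain : Ψ t * Ψ (A*t) ≤ Ψ (α*(B*t)) := by
          have h1 : Ψ t ≤ Ψ (B*t) := hΨmonoOn (Set.mem_Ici.mpr ht0.le)
            (Set.mem_Ici.mpr (by positivity)) (by nlinarith)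
          have h2 : Ψ (A*t) ≤ Ψ (B*t) := hΨmonoOn (Set.mem_Ici.mpr (by positivity))
            (Set.mem_Ici.mpr (by positivity)) (by nlinarith)
          have h3 := hΔ (B*t) (by nlinarith)
          calc Ψ t * Ψ (A*t) ≤ Ψ (B*t) * Ψ (B*t) :=
              mul_le_mul h1 h2 (hΨnn _ (by positivity)) (hΨnn _ (by positivity))
            _ = Ψ (B*t)^2 := (sq _).symm
            _ ≤ Ψ (α*(B*t)) := h3
        have heq2 : 8/lam * (Ψ (α*(B*t)))⁻¹ = (8 * Ψ t) / Ψ (α*(B*t)) := by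
          rw [hΨt]
          ring
        rw [heq2, div_le_div_iff₀ hX hY]
        nlinarith [hΨnn t ht0.le]
end

section
/- Let φ : 𝕋 → ℂ be a measurable function with |φ(w)| ≤ 1 for all w ∈ 𝕋. Then for every r ∈ (0,1) there exists a ∈ 𝕋 such that m({w ∈ 𝕋 : |1 − conj(a)·r·φ(w)| < 3(1−r)}) ≥ ((1−r)/8) · m({w ∈ 𝕋 : |φ(w)| > r}). -/
open MeasureTheory

lemma exists_part (N : ℕ) (hN : 0 < N) (L : ℝ) (hL : 0 < L) (x : ℝ)
    (hx0 : 0 ≤ x) (hxN : x ≤ N * L) :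
    ∃ k < N, (k : ℝ) * L ≤ x ∧ x ≤ ((k : ℝ) + 1) * L := by
  refine ⟨min ⌊x / L⌋₊ (N - 1), by omega, ?_, ?_⟩
  · have h1 : ((min ⌊x / L⌋₊ (N - 1) : ℕ) : ℝ) ≤ x / L :=
      le_trans (by exact_mod_cast min_le_left _ _) (Nat.floor_le (by positivity))
    calc ((min ⌊x / L⌋₊ (N - 1) : ℕ) : ℝ) * L ≤ (x / L) * L :=
          mul_le_mul_of_nonneg_right h1 hL.le
      _ = x := div_mul_cancel₀ x hL.ne'
  · by_cases hc : ⌊x / L⌋₊ ≤ N - 1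
    · rw [min_eq_left hc]
      have h2 : x / L < ⌊x / L⌋₊ + 1 := Nat.lt_floor_add_one _
      have := (div_lt_iff₀ hL).mp h2
      linarith
    · rw [min_eq_right (le_of_not_ge hc)]
      push_cast [Nat.cast_sub hN]
      linarith

lemma key_est (r : ℝ) (hr0 : 0 < r) (hr1 : r < 1) (α : ℝ) (z : ℂ)
    (hz1 : ‖z‖ ≤ 1) (hzr : r ≤ ‖z‖)
    (hδ : |Complex.arg z - α| ≤ (1 - r) / 2) :
    ‖1 - (starRingEnd ℂ) (Complex.exp (α * Complex.I)) * r * z‖ < 3 * (1 - r) := by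
  set ρ := ‖z‖ with hρ
  set δ := Complex.arg z - α with hδdef
  have hz : (ρ : ℂ) * Complex.exp (Complex.arg z * Complex.I) = z :=
    Complex.norm_mul_exp_arg_mul_I z
  have hconj : (starRingEnd ℂ) (Complex.exp (α * Complex.I))
      = Complex.exp (-(α * Complex.I)) := by
    rw [← Complex.exp_conj]; congr 1
    simp [Complex.conj_I, mul_comm]
  have e : Complex.exp (-(↑α * Complex.I)) * Complex.exp (↑(Complex.arg z) * Complex.I)
      = Complex.exp ((δ : ℝ) * Complex.I) := by
    rw [← Complex.exp_add]; congr 1; rw [hδdef]; push_cast; ring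
  have hrw : (starRingEnd ℂ) (Complex.exp (α * Complex.I)) * (r : ℂ) * z
      = ((r * ρ : ℝ) : ℂ) * Complex.exp ((δ : ℝ) * Complex.I) := by
    rw [hconj, ← hz, ← e]; push_cast; ring
  rw [hrw]
  have hρ0 : 0 ≤ ρ := norm_nonneg z
  have hrρ1 : r * ρ ≤ 1 := by nlinarith
  have habs1 : ‖(1 : ℂ) - (r * ρ : ℝ)‖ = 1 - r * ρ := by
    rw [show (1 : ℂ) - ((r * ρ : ℝ) : ℂ) = ((1 - r * ρ : ℝ) : ℂ) by push_cast; ring,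
      Complex.norm_real, Real.norm_eq_abs, abs_of_nonneg (by linarith)]
  have h2 : ‖Complex.exp ((δ : ℝ) * Complex.I) - 1‖ ≤ 2 * |δ| := by
    have hd1 : ‖(δ : ℝ) * Complex.I‖ = |δ| := by
      rw [norm_mul, Complex.norm_I, Complex.norm_real, Real.norm_eq_abs, mul_one]
    have := Complex.norm_exp_sub_one_le (x := (δ : ℝ) * Complex.I)
      (by rw [hd1]; have := abs_nonneg δ; linarith [hδ])
    rwa [hd1] at this
  have h1 : ‖1 - ((r * ρ : ℝ) : ℂ) * Complex.exp ((δ : ℝ) * Complex.I)‖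
      ≤ (1 - r * ρ) + (r * ρ) * ‖Complex.exp ((δ : ℝ) * Complex.I) - 1‖ := by
    have e : (1 : ℂ) - ((r * ρ : ℝ) : ℂ) * Complex.exp ((δ : ℝ) * Complex.I)
        = ((1 : ℂ) - ((r * ρ : ℝ) : ℂ))
          + (-(((r * ρ : ℝ) : ℂ) * (Complex.exp ((δ : ℝ) * Complex.I) - 1))) := by ring
    calc ‖1 - ((r * ρ : ℝ) : ℂ) * Complex.exp ((δ : ℝ) * Complex.I)‖
        ≤ ‖(1 : ℂ) - ((r * ρ : ℝ) : ℂ)‖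
          + ‖-(((r * ρ : ℝ) : ℂ) * (Complex.exp ((δ : ℝ) * Complex.I) - 1))‖ := by
          rw [e]; exact norm_add_le _ _
      _ = (1 - r * ρ) + (r * ρ) * ‖Complex.exp ((δ : ℝ) * Complex.I) - 1‖ := by
          rw [habs1, norm_neg, norm_mul, Complex.norm_real, Real.norm_eq_abs, abs_of_nonneg (by positivity)]
  have habsδ : |δ| ≤ (1 - r) / 2 := hδ
  have hρr : r * r ≤ r * ρ := by nlinarith
  have hnn : 0 ≤ ‖Complex.exp ((δ : ℝ) * Complex.I) - 1‖ :=
    norm_nonneg _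
  nlinarith [h1, h2, abs_nonneg δ]

set_option maxHeartbeats 2000000 in
theorem stmt_6
    (φ : ℂ → ℂ) (hφmeas : Measurable φ)
    (hφbd : ∀ w : ℂ, ‖w‖ = 1 → ‖φ w‖ ≤ 1)
    (r : ℝ) (hr0 : 0 < r) (hr1 : r < 1) :
    ∃ a : ℂ, ‖a‖ = 1 ∧
      ENNReal.ofReal ((1 - r) / 8) * circleMeasure {w : ℂ | r < ‖φ w‖}
        ≤ circleMeasure
            {w : ℂ | ‖1 - (starRingEnd ℂ) a * (r : ℂ) * φ w‖ < 3 * (1 - r)} := by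
  have hπ := Real.pi_pos
  have h1r : 0 < 1 - r := by linarith
  set μ := circleMeasure with hμdef
  set E := {w : ℂ | r < ‖φ w‖} with hE
  have hfmeas : Measurable (fun t : ℝ => Complex.exp (↑t * Complex.I)) :=
    (Complex.measurable_ofReal.mul_const _).cexp
  have hnullset : MeasurableSet {w : ℂ | ‖w‖ ≠ 1} :=
    (continuous_norm.measurable (measurableSet_singleton 1)).compl
  have hnull : μ {w : ℂ | ‖w‖ ≠ 1} = 0 := by
    rw [hμdef, circleMeasure, Measure.smul_apply, Measure.map_apply hfmeas hnullset]
    have hpre : (fun t : ℝ => Complex.exp (↑t * Complex.I)) ⁻¹' {w : ℂ | ‖w‖ ≠ 1}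
        = ∅ := by
      ext t; simp [Complex.norm_exp_ofReal_mul_I]
    rw [hpre]; simp
  have hμtop : μ Set.univ ≠ ⊤ := by
    rw [hμdef, circleMeasure, Measure.smul_apply, Measure.map_apply hfmeas MeasurableSet.univ]
    rw [Set.preimage_univ, Measure.restrict_apply_univ, Real.volume_Ioc]
    exact ENNReal.mul_ne_top
      (ENNReal.inv_ne_top.mpr (by positivity)) ENNReal.ofReal_ne_top
  rcases eq_or_ne (μ E) 0 with hE0 | hE0
  · exact ⟨1, by simp, by rw [hE0, mul_zero]; exact zero_le⟩
  have hEtop : μ E ≠ ⊤ := ne_top_of_le_ne_top hμtop (measure_mono (Set.subset_univ _))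
  set N := ⌈2 * Real.pi / (1 - r)⌉₊ with hNdef
  have hN0 : 0 < N := Nat.ceil_pos.mpr (by positivity)
  have hNlb : 2 * Real.pi ≤ (N : ℝ) * (1 - r) := by
    have h := Nat.le_ceil (2 * Real.pi / (1 - r))
    calc 2 * Real.pi = (2 * Real.pi / (1 - r)) * (1 - r) := by field_simp
      _ ≤ (N : ℝ) * (1 - r) := mul_le_mul_of_nonneg_right h h1r.le
  have hNub : (N : ℝ) * (1 - r) < 8 := by
    have h := Nat.ceil_lt_add_one (a := 2 * Real.pi / (1 - r)) (by positivity)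
    have h2 : 2 * Real.pi / (1 - r) * (1 - r) = 2 * Real.pi := div_mul_cancel₀ _ h1r.ne'
    have h3 : (N : ℝ) * (1 - r) < (2 * Real.pi / (1 - r) + 1) * (1 - r) :=
      mul_lt_mul_of_pos_right h h1r
    nlinarith [Real.pi_lt_d2]
  set L := 2 * Real.pi / (N : ℝ) with hLdef
  have hNpos : (0 : ℝ) < N := by exact_mod_cast hN0
  have hL0 : 0 < L := by positivity
  have hNL : (N : ℝ) * L = 2 * Real.pi := mul_div_cancel₀ _ hNpos.ne'
  have hLle : L ≤ 1 - r := by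
    rw [hLdef, div_le_iff₀ hNpos]; linarith
  set α : ℕ → ℝ := fun k => -Real.pi + ((k : ℝ) + 1 / 2) * L with hαdef
  set S : ℕ → Set ℂ := fun k =>
    {w : ℂ | (‖w‖ = 1 ∧ r < ‖φ w‖) ∧
      ((k : ℝ) * L ≤ Complex.arg (φ w) + Real.pi ∧
        Complex.arg (φ w) + Real.pi ≤ ((k : ℝ) + 1) * L)} with hSdef
  have hcover : {w : ℂ | ‖w‖ = 1 ∧ r < ‖φ w‖}
      ⊆ ⋃ k ∈ Finset.range N, S k := by
    intro w hw
    obtain ⟨k, hkN, hk1, hk2⟩ := exists_part N hN0 L hL0 (Complex.arg (φ w) + Real.pi)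
      (by linarith [Complex.neg_pi_lt_arg (φ w)])
      (by rw [hNL]; linarith [Complex.arg_le_pi (φ w)])
    exact Set.mem_biUnion (Finset.mem_range.mpr hkN) ⟨hw, hk1, hk2⟩
  have hEsub : μ E ≤ ∑ k ∈ Finset.range N, μ (S k) := by
    have hsub : E ⊆ {w : ℂ | ‖w‖ = 1 ∧ r < ‖φ w‖}
        ∪ {w : ℂ | ‖w‖ ≠ 1} := by
      intro w hw
      by_cases h : ‖w‖ = 1
      · exact Or.inl ⟨h, hw⟩
      · exact Or.inr h
    calc μ E ≤ μ ({w : ℂ | ‖w‖ = 1 ∧ r < ‖φ w‖}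
          ∪ {w : ℂ | ‖w‖ ≠ 1}) := measure_mono hsub
      _ ≤ μ {w : ℂ | ‖w‖ = 1 ∧ r < ‖φ w‖}
          + μ {w : ℂ | ‖w‖ ≠ 1} := measure_union_le _ _
      _ = μ {w : ℂ | ‖w‖ = 1 ∧ r < ‖φ w‖} := by rw [hnull, add_zero]
      _ ≤ μ (⋃ k ∈ Finset.range N, S k) := measure_mono hcover
      _ ≤ ∑ k ∈ Finset.range N, μ (S k) := measure_biUnion_finset_le _ _
  have hkey : ∃ k ∈ Finset.range N, ENNReal.ofReal ((1 - r) / 8) * μ E ≤ μ (S k) := by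
    by_contra hcon
    push_neg at hcon
    have hsum : ∑ k ∈ Finset.range N, μ (S k)
        ≤ N • (ENNReal.ofReal ((1 - r) / 8) * μ E) := by
      calc ∑ k ∈ Finset.range N, μ (S k)
          ≤ ∑ k ∈ Finset.range N, ENNReal.ofReal ((1 - r) / 8) * μ E :=
            Finset.sum_le_sum fun k hk => (hcon k hk).le
        _ = N • (ENNReal.ofReal ((1 - r) / 8) * μ E) := by
            rw [Finset.sum_const, Finset.card_range]
    have hNc : (N : ENNReal) * ENNReal.ofReal ((1 - r) / 8) < 1 := by
      have hcast : ((N : ENNReal)) = ENNReal.ofReal (N : ℝ) := by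
        rw [ENNReal.ofReal_natCast]
      rw [hcast, ← ENNReal.ofReal_mul (by positivity)]
      exact ENNReal.ofReal_lt_one.mpr (by nlinarith)
    have hcontra : μ E < μ E := by
      calc μ E ≤ ∑ k ∈ Finset.range N, μ (S k) := hEsub
        _ ≤ N • (ENNReal.ofReal ((1 - r) / 8) * μ E) := hsum
        _ = ((N : ENNReal) * ENNReal.ofReal ((1 - r) / 8)) * μ E := by
            rw [nsmul_eq_mul, mul_assoc]
        _ < 1 * μ E := ENNReal.mul_lt_mul_left hE0 hEtop hNc
        _ = μ E := one_mul _
    exact absurd hcontra (lt_irrefl _)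
  obtain ⟨k, hkN, hk⟩ := hkey
  clear_value N L α S
  refine ⟨Complex.exp (↑(α k) * Complex.I), ?_, ?_⟩
  · exact Complex.norm_exp_ofReal_mul_I _
  refine hk.trans (measure_mono ?_)
  intro w hw
  simp only [hSdef, Set.mem_setOf_eq] at hw
  obtain ⟨⟨hw1, hwr⟩, hlo, hhi⟩ := hw
  have hz1 : ‖φ w‖ ≤ 1 := hφbd w hw1
  have hδ : |Complex.arg (φ w) - α k| ≤ (1 - r) / 2 := by
    have hα : α k = -Real.pi + ((k : ℝ) + 1 / 2) * L := by rw [hαdef]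
    rw [abs_le, hα]
    constructor <;> nlinarith [hlo, hhi, hLle]
  exact key_est r hr0 hr1 (α k) (φ w) hz1 hwr.le hδ
end

section
/- Let Ψ be an Orlicz function. The following are equivalent: (i) every Lebesgue-measurable function f : [0,1] → ℂ for which there exists c > 0 with Leb({x ∈ [0,1] : |f(x)| > t}) ≤ 1/Ψ(c·t) for all t > 0 satisfies ∫₀¹ Ψ(|f(x)|/B) dx < ∞ for some B > 0 (that is, the weak Orlicz space L^{Ψ,∞}([0,1]) coincides with L^Ψ([0,1])); (ii) there exists B > 1 such that ∫_{Ψ(1)}^{∞} dx / Ψ(B·Ψ⁻¹(x)) < ∞. -/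
open MeasureTheory

theorem stmt_7
    (Ψ Ψinv : ℝ → ℝ)
    (hΨ0 : Ψ 0 = 0)
    (hΨmono : StrictMonoOn Ψ (Set.Ici 0))
    (hΨconv : StrictConvexOn ℝ (Set.Ici 0) Ψ)
    (hΨcont : ContinuousOn Ψ (Set.Ici 0))
    (hΨlim : Filter.Tendsto (fun x => Ψ x / x) Filter.atTop Filter.atTop)
    (hΨinv1 : ∀ x, 0 ≤ x → Ψinv (Ψ x) = x)
    (hΨinv2 : ∀ y, 0 ≤ y → Ψ (Ψinv y) = y)
    (hΨinv0 : ∀ y, 0 ≤ y → 0 ≤ Ψinv y) :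
    (∀ f : ℝ → ℂ, Measurable f →
      (∃ c > (0 : ℝ), ∀ t > (0 : ℝ),
        (volume.restrict (Set.Icc (0 : ℝ) 1)) {x : ℝ | t < ‖f x‖}
          ≤ ENNReal.ofReal (1 / Ψ (c * t))) →
      ∃ B > (0 : ℝ),
        (∫⁻ x in Set.Icc (0 : ℝ) 1, ENNReal.ofReal (Ψ (‖f x‖ / B))) < ⊤)
    ↔
    (∃ B > (1 : ℝ),
      (∫⁻ x in Set.Ioi (Ψ 1), ENNReal.ofReal (1 / Ψ (B * Ψinv x))) < ⊤) := by
  classical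
  have hmono : MonotoneOn Ψ (Set.Ici 0) := hΨmono.monotoneOn
  have hΨnn : ∀ x, 0 ≤ x → 0 ≤ Ψ x := fun x hx => by
    have := hmono (Set.mem_Ici.2 le_rfl) (Set.mem_Ici.2 hx) hx
    rwa [hΨ0] at this
  have hΨpos : ∀ x, 0 < x → 0 < Ψ x := fun x hx => by
    have := hΨmono (Set.mem_Ici.2 le_rfl) (Set.mem_Ici.2 hx.le) hx
    rwa [hΨ0] at this
  have hΨ1pos : 0 < Ψ 1 := hΨpos 1 one_pos
  have hinvmono : ∀ a b : ℝ, 0 ≤ a → a ≤ b → Ψinv a ≤ Ψinv b := by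
    intro a b ha hab
    by_contra hcon
    push_neg at hcon
    have := hΨmono (Set.mem_Ici.2 (hΨinv0 b (ha.trans hab))) (Set.mem_Ici.2 (hΨinv0 a ha)) hcon
    rw [hΨinv2 a ha, hΨinv2 b (ha.trans hab)] at this
    exact absurd hab (not_le.2 this)
  have hinvpos : ∀ s : ℝ, 0 < s → 0 < Ψinv s := by
    intro s hs
    rcases (hΨinv0 s hs.le).lt_or_eq with h | h
    · exact h
    · exfalso
      have := hΨinv2 s hs.le
      rw [← h, hΨ0] at this
      exact absurd this.symm (ne_of_gt hs)
  -- s < Ψ y ↔ Ψinv s < y  (for 0 ≤ s, 0 ≤ y)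
  have hlt_iff : ∀ s y : ℝ, 0 ≤ s → 0 ≤ y → (s < Ψ y ↔ Ψinv s < y) := by
    intro s y hs hy
    conv_lhs => rw [← hΨinv2 s hs]
    exact hΨmono.lt_iff_lt (Set.mem_Ici.2 (hΨinv0 s hs)) (Set.mem_Ici.2 hy)
  -- Ψ t < u ↔ t < Ψinv u  (for 0 ≤ t, 0 ≤ u)
  have hlt_iff2 : ∀ t u : ℝ, 0 ≤ t → 0 ≤ u → (Ψ t < u ↔ t < Ψinv u) := by
    intro t u ht hu
    conv_lhs => rw [← hΨinv2 u hu]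
    exact hΨmono.lt_iff_lt (Set.mem_Ici.2 ht) (Set.mem_Ici.2 (hΨinv0 u hu))
  -- the monotone truncation of Ψ, used for measurability
  have hhmono : Monotone (fun y : ℝ => Ψ (max y 0)) := fun a b hab =>
    hmono (Set.mem_Ici.2 (le_max_right _ _)) (Set.mem_Ici.2 (le_max_right _ _))
      (max_le_max hab le_rfl)
  have hhmeas : Measurable (fun y : ℝ => Ψ (max y 0)) := hhmono.measurable
  have hhnn : ∀ y : ℝ, 0 ≤ Ψ (max y 0) := fun y => hΨnn _ (le_max_right _ _)
  have hvolIcc : volume.restrict (Set.Icc (0:ℝ) 1) Set.univ = 1 := by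
    rw [Measure.restrict_apply_univ, Real.volume_Icc]
    simp
  constructor
  · -- (i) → (ii)
    intro H
    set g : ℝ → ℝ := fun x => if x ∈ Set.Ioc (0:ℝ) 1 then Ψinv (max (1/x) 1) else 0 with hgdef
    have hm1 : Measurable fun x : ℝ => 1/x := by
      simpa [one_div] using (measurable_inv : Measurable fun x : ℝ => x⁻¹)
    have hinvmax : Monotone fun y : ℝ => Ψinv (max y 1) := fun a b hab =>
      hinvmono _ _ (le_trans zero_le_one (le_max_right _ _)) (max_le_max hab le_rfl)
    have hgm : Measurable g :=
      Measurable.ite measurableSet_Ioc (hinvmax.measurable.comp hm1) measurable_const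
    have hgnn : ∀ x, 0 ≤ g x := by
      intro x
      rw [hgdef]
      by_cases hx : x ∈ Set.Ioc (0:ℝ) 1
      · simp only [hx, if_pos]
        exact hΨinv0 _ (le_trans zero_le_one (le_max_right _ _))
      · simp [hx]
    set f : ℝ → ℂ := fun x => (g x : ℂ) with hfdef
    have hfm : Measurable f := Complex.measurable_ofReal.comp hgm
    have habs : ∀ x, ‖f x‖ = g x := fun x => by
      rw [hfdef]; simp [abs_of_nonneg (hgnn x)]
    -- description of superlevel sets of g
    have hset : ∀ t : ℝ, 0 < t →
        {x : ℝ | t < g x} = Set.Ioc 0 1 ∩ Set.Iio (1 / Ψ t) := by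
      intro t ht
      have hΨt : 0 < Ψ t := hΨpos t ht
      ext x
      simp only [Set.mem_setOf_eq, Set.mem_inter_iff, Set.mem_Iio]
      constructor
      · intro hx
        by_cases hx1 : x ∈ Set.Ioc (0:ℝ) 1
        · rw [hgdef] at hx
          simp only [hx1, if_pos] at hx
          have h1x : (1:ℝ) ≤ 1 / x := one_le_one_div hx1.1 hx1.2
          rw [max_eq_left h1x] at hx
          have hnn : (0:ℝ) ≤ 1 / x := le_trans zero_le_one h1x
          have h1 : Ψ t < 1 / x := by
            have h2 := hΨmono (Set.mem_Ici.2 ht.le) (Set.mem_Ici.2 (hΨinv0 _ hnn)) hx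
            rwa [hΨinv2 _ hnn] at h2
          refine ⟨hx1, ?_⟩
          rw [lt_div_iff₀ hΨt]
          rw [lt_div_iff₀ hx1.1] at h1
          linarith [h1]
        · rw [hgdef] at hx
          simp only [hx1, if_neg, not_false_iff] at hx
          exact absurd hx (not_lt.2 ht.le)
      · rintro ⟨hx1, hx2⟩
        rw [hgdef]
        simp only [hx1, if_pos]
        have h1x : (1:ℝ) ≤ 1 / x := one_le_one_div hx1.1 hx1.2
        rw [max_eq_left h1x]
        have h1 : Ψ t < 1 / x := by
          rw [lt_div_iff₀ hx1.1]
          rw [lt_div_iff₀ hΨt] at hx2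
          linarith [hx2]
        exact (hlt_iff2 t (1/x) ht.le (le_trans zero_le_one h1x)).1 h1
    -- upper bound for the distribution of g
    have hub : ∀ t : ℝ, 0 < t →
        volume.restrict (Set.Icc (0:ℝ) 1) {x : ℝ | t < g x} ≤ ENNReal.ofReal (1 / Ψ t) := by
      intro t ht
      calc volume.restrict (Set.Icc (0:ℝ) 1) {x : ℝ | t < g x}
          ≤ volume {x : ℝ | t < g x} := Measure.restrict_le_self _
        _ ≤ volume (Set.Ioo 0 (1 / Ψ t)) := by
            apply measure_mono
            rw [hset t ht]
            rintro x ⟨hx1, hx2⟩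
            exact ⟨hx1.1, hx2⟩
        _ = ENNReal.ofReal (1 / Ψ t) := by rw [Real.volume_Ioo, sub_zero]
    -- lower bound for the distribution of g when Ψ t ≥ 1
    have hlb : ∀ t : ℝ, 0 < t → 1 ≤ Ψ t →
        ENNReal.ofReal (1 / Ψ t) ≤ volume.restrict (Set.Icc (0:ℝ) 1) {x : ℝ | t < g x} := by
      intro t ht h1
      have hΨt : 0 < Ψ t := hΨpos t ht
      have hle1 : 1 / Ψ t ≤ 1 := by
        rw [div_le_one hΨt]; exact h1
      have hsub : Set.Ioo 0 (1 / Ψ t) ⊆ {x : ℝ | t < g x} := by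
        rw [hset t ht]
        rintro x ⟨hx1, hx2⟩
        exact ⟨⟨hx1, le_trans hx2.le hle1⟩, hx2⟩
      have hsub2 : Set.Ioo 0 (1 / Ψ t) ⊆ Set.Icc (0:ℝ) 1 := fun x hx =>
        ⟨hx.1.le, le_trans hx.2.le hle1⟩
      calc ENNReal.ofReal (1 / Ψ t) = volume (Set.Ioo 0 (1 / Ψ t)) := by
            rw [Real.volume_Ioo, sub_zero]
        _ = volume.restrict (Set.Icc (0:ℝ) 1) (Set.Ioo 0 (1 / Ψ t)) := by
            rw [Measure.restrict_apply measurableSet_Ioo,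
              Set.inter_eq_self_of_subset_left hsub2]
        _ ≤ volume.restrict (Set.Icc (0:ℝ) 1) {x : ℝ | t < g x} := measure_mono hsub
    -- apply hypothesis (i) to this f
    obtain ⟨B, hBpos, hfin⟩ := H f hfm ⟨1, one_pos, fun t ht => by
      have : {x : ℝ | t < ‖f x‖} = {x : ℝ | t < g x} := by
        ext x; simp [habs x]
      rw [this, one_mul]
      exact hub t ht⟩
    set B' : ℝ := max B 2 with hB'def
    have hB'B : B ≤ B' := le_max_left _ _
    have hB'1 : (1:ℝ) < B' := lt_of_lt_of_le one_lt_two (le_max_right _ _)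
    have hB'pos : (0:ℝ) < B' := lt_trans one_pos hB'1
    refine ⟨B', hB'1, ?_⟩
    -- the integral with B' is finite
    have hfin' : (∫⁻ x in Set.Icc (0:ℝ) 1,
        ENNReal.ofReal (Ψ (‖f x‖ / B'))) < ⊤ := by
      refine lt_of_le_of_lt (lintegral_mono fun x => ?_) hfin
      apply ENNReal.ofReal_le_ofReal
      apply hmono (Set.mem_Ici.2 (div_nonneg (norm_nonneg _) hB'pos.le))
        (Set.mem_Ici.2 (div_nonneg (norm_nonneg _) hBpos.le))
      exact div_le_div_of_nonneg_left (norm_nonneg _) hBpos hB'B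
    -- layer cake
    have hlc : (∫⁻ x in Set.Icc (0:ℝ) 1, ENNReal.ofReal (Ψ (‖f x‖ / B')))
        = ∫⁻ s in Set.Ioi (0:ℝ),
            volume.restrict (Set.Icc (0:ℝ) 1) {x : ℝ | s < Ψ (max (g x / B') 0)} := by
      have : (∫⁻ x in Set.Icc (0:ℝ) 1, ENNReal.ofReal (Ψ (‖f x‖ / B')))
          = ∫⁻ x in Set.Icc (0:ℝ) 1, ENNReal.ofReal (Ψ (max (g x / B') 0)) := by
        apply lintegral_congr
        intro x
        rw [habs x, max_eq_left (div_nonneg (hgnn x) hB'pos.le)]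
      rw [this]
      exact lintegral_eq_lintegral_meas_lt _
        (ae_of_all _ fun x => hhnn _)
        ((hhmeas.comp (hgm.div_const B')).aemeasurable)
    set T : ℝ := max (Ψ 1) 1 with hTdef
    rw [← Set.Ioc_union_Ioi_eq_Ioi (le_max_left (Ψ 1) 1),
      lintegral_union measurableSet_Ioi (Set.Ioc_disjoint_Ioi le_rfl)]
    refine ENNReal.add_lt_top.2 ⟨?_, ?_⟩
    · -- middle piece: bounded integrand on bounded interval
      have hbd : ∀ s ∈ Set.Ioc (Ψ 1) T,
          ENNReal.ofReal (1 / Ψ (B' * Ψinv s)) ≤ ENNReal.ofReal (1 / Ψ B') := by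
        intro s hs
        apply ENNReal.ofReal_le_ofReal
        have hs0 : (0:ℝ) ≤ Ψ 1 := hΨ1pos.le
        have h1 : (1:ℝ) ≤ Ψinv s := by
          have := hinvmono (Ψ 1) s hs0 hs.1.le
          rwa [hΨinv1 1 zero_le_one] at this
        have h2 : B' ≤ B' * Ψinv s := le_mul_of_one_le_right hB'pos.le h1
        have h3 : Ψ B' ≤ Ψ (B' * Ψinv s) :=
          hmono (Set.mem_Ici.2 hB'pos.le) (Set.mem_Ici.2 (le_trans hB'pos.le h2)) h2
        exact one_div_le_one_div_of_le (hΨpos B' hB'pos) h3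
      calc (∫⁻ s in Set.Ioc (Ψ 1) T, ENNReal.ofReal (1 / Ψ (B' * Ψinv s)))
          ≤ ∫⁻ _ in Set.Ioc (Ψ 1) T, ENNReal.ofReal (1 / Ψ B') :=
            setLIntegral_mono' measurableSet_Ioc hbd
        _ = ENNReal.ofReal (1 / Ψ B') * volume (Set.Ioc (Ψ 1) T) := by
            rw [setLIntegral_const]
        _ < ⊤ := ENNReal.mul_lt_top ENNReal.ofReal_lt_top (by
            rw [Real.volume_Ioc]; exact ENNReal.ofReal_lt_top)
    · -- tail piece
      have key : ∀ s ∈ Set.Ioi T,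
          ENNReal.ofReal (1 / Ψ (B' * Ψinv s))
            ≤ volume.restrict (Set.Icc (0:ℝ) 1) {x : ℝ | s < Ψ (max (g x / B') 0)} := by
        intro s hs
        have hs1 : (1:ℝ) < s := lt_of_le_of_lt (le_max_right (Ψ 1) 1) hs
        have hs0 : (0:ℝ) < s := lt_trans one_pos hs1
        set t : ℝ := B' * Ψinv s with htdef
        have htpos : 0 < t := mul_pos hB'pos (hinvpos s hs0)
        have hΨt1 : 1 ≤ Ψ t := by
          have h1 : Ψinv 1 ≤ Ψinv s := hinvmono 1 s zero_le_one hs1.le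
          have h2 : Ψinv 1 ≤ B' * Ψinv s :=
            le_trans h1 (le_mul_of_one_le_left (hΨinv0 s hs0.le) hB'1.le)
          have := hmono (Set.mem_Ici.2 (hΨinv0 1 zero_le_one))
            (Set.mem_Ici.2 (le_trans (hΨinv0 1 zero_le_one) h2)) h2
          rwa [hΨinv2 1 zero_le_one] at this
        have hseteq : {x : ℝ | s < Ψ (max (g x / B') 0)} = {x : ℝ | t < g x} := by
          ext x
          simp only [Set.mem_setOf_eq]
          rw [max_eq_left (div_nonneg (hgnn x) hB'pos.le),
            hlt_iff s (g x / B') hs0.le (div_nonneg (hgnn x) hB'pos.le),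
            lt_div_iff₀ hB'pos, htdef, mul_comm]
        rw [hseteq]
        exact hlb t htpos hΨt1
      calc (∫⁻ s in Set.Ioi T, ENNReal.ofReal (1 / Ψ (B' * Ψinv s)))
          ≤ ∫⁻ s in Set.Ioi T,
              volume.restrict (Set.Icc (0:ℝ) 1) {x : ℝ | s < Ψ (max (g x / B') 0)} :=
            setLIntegral_mono' measurableSet_Ioi key
        _ ≤ ∫⁻ s in Set.Ioi (0:ℝ),
              volume.restrict (Set.Icc (0:ℝ) 1) {x : ℝ | s < Ψ (max (g x / B') 0)} :=
            lintegral_mono_set fun s hs =>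
              lt_trans (lt_of_lt_of_le one_pos (le_max_right (Ψ 1) 1)) hs
        _ = ∫⁻ x in Set.Icc (0:ℝ) 1, ENNReal.ofReal (Ψ (‖f x‖ / B')) := hlc.symm
        _ < ⊤ := hfin'
  · -- (ii) → (i)
    rintro ⟨B, hB1, hfin⟩ f hf ⟨c, hc, hdist⟩
    have hBpos : (0:ℝ) < B := lt_trans one_pos hB1
    have hB0pos : (0:ℝ) < B / c := div_pos hBpos hc
    refine ⟨B / c, hB0pos, ?_⟩
    have ham : Measurable fun x => ‖f x‖ := by
      exact hf.norm
    -- layer cake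
    have hlc : (∫⁻ x in Set.Icc (0:ℝ) 1, ENNReal.ofReal (Ψ (‖f x‖ / (B / c))))
        = ∫⁻ s in Set.Ioi (0:ℝ),
            volume.restrict (Set.Icc (0:ℝ) 1)
              {x : ℝ | s < Ψ (max (‖f x‖ / (B / c)) 0)} := by
      have : (∫⁻ x in Set.Icc (0:ℝ) 1, ENNReal.ofReal (Ψ (‖f x‖ / (B / c))))
          = ∫⁻ x in Set.Icc (0:ℝ) 1,
              ENNReal.ofReal (Ψ (max (‖f x‖ / (B / c)) 0)) := by
        apply lintegral_congr
        intro x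
        rw [max_eq_left (div_nonneg (norm_nonneg _) hB0pos.le)]
      rw [this]
      exact lintegral_eq_lintegral_meas_lt _
        (ae_of_all _ fun x => hhnn _)
        ((hhmeas.comp (ham.div_const (B / c))).aemeasurable)
    rw [hlc, ← Set.Ioc_union_Ioi_eq_Ioi hΨ1pos.le,
      lintegral_union measurableSet_Ioi (Set.Ioc_disjoint_Ioi le_rfl)]
    refine ENNReal.add_lt_top.2 ⟨?_, ?_⟩
    · calc (∫⁻ s in Set.Ioc (0:ℝ) (Ψ 1),
            volume.restrict (Set.Icc (0:ℝ) 1)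
              {x : ℝ | s < Ψ (max (‖f x‖ / (B / c)) 0)})
          ≤ ∫⁻ _ in Set.Ioc (0:ℝ) (Ψ 1), 1 := by
            apply setLIntegral_mono' measurableSet_Ioc
            intro s _
            calc volume.restrict (Set.Icc (0:ℝ) 1) _
                ≤ volume.restrict (Set.Icc (0:ℝ) 1) Set.univ :=
                  measure_mono (Set.subset_univ _)
              _ = 1 := hvolIcc
        _ = volume (Set.Ioc (0:ℝ) (Ψ 1)) := setLIntegral_one _
        _ < ⊤ := by rw [Real.volume_Ioc]; exact ENNReal.ofReal_lt_top
    · have key : ∀ s ∈ Set.Ioi (Ψ 1),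
          volume.restrict (Set.Icc (0:ℝ) 1)
            {x : ℝ | s < Ψ (max (‖f x‖ / (B / c)) 0)}
            ≤ ENNReal.ofReal (1 / Ψ (B * Ψinv s)) := by
        intro s hs
        have hs0 : (0:ℝ) < s := lt_trans hΨ1pos hs
        set t : ℝ := (B / c) * Ψinv s with htdef
        have htpos : 0 < t := mul_pos hB0pos (hinvpos s hs0)
        have hseteq : {x : ℝ | s < Ψ (max (‖f x‖ / (B / c)) 0)}
            = {x : ℝ | t < ‖f x‖} := by
          ext x
          simp only [Set.mem_setOf_eq]
          rw [max_eq_left (div_nonneg (norm_nonneg _) hB0pos.le),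
            hlt_iff s _ hs0.le (div_nonneg (norm_nonneg _) hB0pos.le),
            lt_div_iff₀ hB0pos, htdef, mul_comm]
        rw [hseteq]
        have hct : c * t = B * Ψinv s := by
          rw [htdef]; field_simp
        have := hdist t htpos
        rwa [hct] at this
      calc (∫⁻ s in Set.Ioi (Ψ 1),
            volume.restrict (Set.Icc (0:ℝ) 1)
              {x : ℝ | s < Ψ (max (‖f x‖ / (B / c)) 0)})
          ≤ ∫⁻ s in Set.Ioi (Ψ 1), ENNReal.ofReal (1 / Ψ (B * Ψinv s)) :=
            setLIntegral_mono' measurableSet_Ioi key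
        _ < ⊤ := hfin
end

section
/- Let Ψ be an Orlicz function satisfying condition Δ¹, and let (Ω,P) be a probability space. Then every measurable f : Ω → ℂ for which there exists c > 0 with P({|f| > t}) ≤ 1/Ψ(c·t) for all t > 0 satisfies ∫_Ω Ψ(|f|/B) dP < ∞ for some B > 0; that is, the weak Orlicz space L^{Ψ,∞}(Ω) coincides with the Orlicz space L^Ψ(Ω). -/
open MeasureTheory

theorem stmt_8 {Ω : Type*} [MeasurableSpace Ω] (P : Measure Ω) [IsProbabilityMeasure P]
    (Ψ Ψinv : ℝ → ℝ)
    (hΨ0 : Ψ 0 = 0)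
    (hΨmono : StrictMonoOn Ψ (Set.Ici 0))
    (hΨconv : StrictConvexOn ℝ (Set.Ici 0) Ψ)
    (hΨcont : ContinuousOn Ψ (Set.Ici 0))
    (hΨlim : Filter.Tendsto (fun x => Ψ x / x) Filter.atTop Filter.atTop)
    (hΨinv1 : ∀ x, 0 ≤ x → Ψinv (Ψ x) = x)
    (hΨinv2 : ∀ y, 0 ≤ y → Ψ (Ψinv y) = y)
    (hΨinv0 : ∀ y, 0 ≤ y → 0 ≤ Ψinv y)
    -- condition Δ¹
    (hΔ1 : ∃ β > (1 : ℝ), ∃ x₀ > (0 : ℝ), ∀ x ≥ x₀, x * Ψ x ≤ Ψ (β * x))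
    (f : Ω → ℂ) (hf : Measurable f)
    (hweak : ∃ c > (0 : ℝ), ∀ t > (0 : ℝ),
      P {ω : Ω | t < ‖f ω‖} ≤ ENNReal.ofReal (1 / Ψ (c * t))) :
    ∃ B > (0 : ℝ),
      (∫⁻ ω, ENNReal.ofReal (Ψ (‖f ω‖ / B)) ∂P) < ⊤ := by
  obtain ⟨β, hβ, x₀, hx₀, hΔ⟩ := hΔ1
  obtain ⟨c, hc, hw⟩ := hweak
  have hβ0 : (0:ℝ) < β := lt_trans one_pos hβ
  set x₁ : ℝ := max x₀ 1 with hx₁def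
  have hx₁1 : (1:ℝ) ≤ x₁ := le_max_right _ _
  have hx₁0 : x₀ ≤ x₁ := le_max_left _ _
  have hx₁pos : (0:ℝ) < x₁ := lt_of_lt_of_le one_pos hx₁1
  have hΨpos : ∀ x : ℝ, 0 < x → 0 < Ψ x := by
    intro x hx
    have := hΨmono (Set.self_mem_Ici) (Set.mem_Ici.2 hx.le) hx
    linarith [this, hΨ0.ge]
  have hΨmono' : MonotoneOn Ψ (Set.Ici 0) := hΨmono.monotoneOn
  set B : ℝ := β^2 / c with hB
  have hBpos : (0:ℝ) < B := by positivity
  refine ⟨B, hBpos, ?_⟩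
  have hmeas : Measurable fun ω => ‖f ω‖ := by
    exact hf.norm
  set a : ℕ → ℝ := fun n => Ψ (β^(n+2) * x₁) with ha
  set S : ℕ → Set Ω := fun n => {ω | B * (β^(n+1) * x₁) < ‖f ω‖} with hSdef
  have hSmeas : ∀ n, MeasurableSet (S n) := fun n =>
    measurableSet_lt measurable_const hmeas
  -- pointwise bound
  have hpt : ∀ ω, ENNReal.ofReal (Ψ (‖f ω‖ / B)) ≤
      ENNReal.ofReal (Ψ (β * x₁)) +
        ∑' n, (S n).indicator (fun _ => ENNReal.ofReal (a n)) ω := by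
    intro ω
    set g : ℝ := ‖f ω‖ / B with hg
    have hg0 : 0 ≤ g := by positivity
    by_cases hle : g ≤ β * x₁
    · refine le_trans ?_ le_self_add
      exact ENNReal.ofReal_le_ofReal
        (hΨmono' (Set.mem_Ici.2 hg0) (Set.mem_Ici.2 (by positivity)) hle)
    · push_neg at hle
      have hex : ∃ k, ¬ (β^(k+1) * x₁ < g) := by
        obtain ⟨N, hN⟩ := pow_unbounded_of_one_lt g hβ
        refine ⟨N, not_lt.2 ?_⟩
        have h1 : β^N ≤ β^(N+1) := pow_le_pow_right₀ hβ.le (Nat.le_succ N)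
        have h2 : β^(N+1) ≤ β^(N+1) * x₁ :=
          le_mul_of_one_le_right (by positivity) hx₁1
        linarith
      have hm0 : Nat.find hex ≠ 0 := by
        intro h0
        have hsp := Nat.find_spec hex
        rw [h0] at hsp
        norm_num at hsp
        exact absurd hle (not_lt.2 hsp)
      obtain ⟨n, hmn⟩ : ∃ n, Nat.find hex = n + 1 :=
        ⟨Nat.find hex - 1, (Nat.succ_pred_eq_of_pos (Nat.pos_of_ne_zero hm0)).symm⟩
      have hlow : β^(n+1) * x₁ < g := by
        have := Nat.find_min hex (m := n) (by omega)
        exact not_not.mp this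
      have hhigh : g ≤ β^(n+2) * x₁ := by
        have hsp := Nat.find_spec hex
        rw [hmn] at hsp
        exact not_lt.1 hsp
      have hωS : ω ∈ S n := by
        simp only [hSdef, Set.mem_setOf_eq]
        have := (lt_div_iff₀ hBpos).1 hlow
        linarith [this]
      have h1 : ENNReal.ofReal (Ψ g) ≤ ENNReal.ofReal (a n) :=
        ENNReal.ofReal_le_ofReal
          (hΨmono' (Set.mem_Ici.2 hg0) (Set.mem_Ici.2 (by positivity)) hhigh)
      refine le_trans h1 (le_trans ?_ le_add_self)
      have : (S n).indicator (fun _ => ENNReal.ofReal (a n)) ω = ENNReal.ofReal (a n) :=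
        Set.indicator_of_mem hωS _
      rw [← this]
      exact ENNReal.le_tsum n
  -- per-term bound
  have hterm : ∀ n, ENNReal.ofReal (a n) * P (S n) ≤ ENNReal.ofReal (1/β) ^ n := by
    intro n
    have htpos : (0:ℝ) < B * (β^(n+1) * x₁) := by positivity
    have h1 := hw _ htpos
    have heq : c * (B * (β^(n+1) * x₁)) = β^(n+3) * x₁ := by
      rw [hB]; field_simp; ring
    rw [heq] at h1
    have hxge : β^(n+2) * x₁ ≥ x₀ := by
      have h2 : (1:ℝ) ≤ β^(n+2) := one_le_pow₀ hβ.le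
      nlinarith
    have hΔn := hΔ _ hxge
    have h3 : β * (β^(n+2) * x₁) = β^(n+3) * x₁ := by ring
    rw [h3] at hΔn
    have hapos : 0 < a n := hΨpos _ (by positivity)
    have hΨ3pos : 0 < Ψ (β^(n+3) * x₁) := hΨpos _ (by positivity)
    have hreal : a n * (1 / Ψ (β^(n+3) * x₁)) ≤ (1/β)^n := by
      have h4 : β^n ≤ β^(n+2) * x₁ := by
        have h5 : β^n ≤ β^(n+2) := pow_le_pow_right₀ hβ.le (by omega)
        nlinarith
      have key : a n * β^n ≤ Ψ (β^(n+3) * x₁) := by nlinarith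
      rw [one_div_pow, mul_one_div, div_le_div_iff₀ hΨ3pos (pow_pos hβ0 n)]
      linarith
    calc ENNReal.ofReal (a n) * P (S n)
        ≤ ENNReal.ofReal (a n) * ENNReal.ofReal (1 / Ψ (β^(n+3) * x₁)) :=
          mul_le_mul_right h1 _
      _ = ENNReal.ofReal (a n * (1 / Ψ (β^(n+3) * x₁))) :=
          (ENNReal.ofReal_mul hapos.le).symm
      _ ≤ ENNReal.ofReal ((1/β)^n) := ENNReal.ofReal_le_ofReal hreal
      _ = ENNReal.ofReal (1/β) ^ n := ENNReal.ofReal_pow (by positivity) n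
  have hgeo : ∑' n : ℕ, ENNReal.ofReal (1/β) ^ n < ⊤ := by
    rw [ENNReal.tsum_geometric]
    have hr1 : ENNReal.ofReal (1/β) < 1 :=
      ENNReal.ofReal_lt_one.2 ((div_lt_one hβ0).2 hβ)
    exact ENNReal.inv_lt_top.2 (tsub_pos_of_lt hr1)
  calc ∫⁻ ω, ENNReal.ofReal (Ψ (‖f ω‖ / B)) ∂P
      ≤ ∫⁻ ω, (ENNReal.ofReal (Ψ (β * x₁)) +
          ∑' n, (S n).indicator (fun _ => ENNReal.ofReal (a n)) ω) ∂P :=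
        lintegral_mono hpt
    _ = ENNReal.ofReal (Ψ (β * x₁)) +
          ∑' n, ENNReal.ofReal (a n) * P (S n) := by
        rw [lintegral_add_left measurable_const, lintegral_const, measure_univ, mul_one,
          lintegral_tsum (fun n => (measurable_const.indicator (hSmeas n)).aemeasurable)]
        congr 1
        exact tsum_congr fun n => lintegral_indicator_const (hSmeas n) _
    _ ≤ ENNReal.ofReal (Ψ (β * x₁)) + ∑' n : ℕ, ENNReal.ofReal (1/β) ^ n :=
        add_le_add_right (ENNReal.tsum_le_tsum hterm) _
    _ < ⊤ := ENNReal.add_lt_top.2 ⟨ENNReal.ofReal_lt_top, hgeo⟩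
end

section
/- Let Ψ be an Orlicz function and suppose that ∫_{Ψ(1)}^{∞} dx / Ψ(B·Ψ⁻¹(x)) < ∞ for some B > 1. Then Ψ(x)/Ψ(2Bx) → 0 as x → ∞; in particular Ψ satisfies condition Δ⁰. -/
open MeasureTheory

theorem stmt_9
    (Ψ Ψinv : ℝ → ℝ)
    (hΨ0 : Ψ 0 = 0)
    (hΨmono : StrictMonoOn Ψ (Set.Ici 0))
    (hΨconv : StrictConvexOn ℝ (Set.Ici 0) Ψ)
    (hΨcont : ContinuousOn Ψ (Set.Ici 0))
    (hΨlim : Filter.Tendsto (fun x => Ψ x / x) Filter.atTop Filter.atTop)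
    (hΨinv1 : ∀ x, 0 ≤ x → Ψinv (Ψ x) = x)
    (hΨinv2 : ∀ y, 0 ≤ y → Ψ (Ψinv y) = y)
    (hΨinv0 : ∀ y, 0 ≤ y → 0 ≤ Ψinv y)
    (B : ℝ) (hB : 1 < B)
    (hint : (∫⁻ x in Set.Ioi (Ψ 1), ENNReal.ofReal (1 / Ψ (B * Ψinv x))) < ⊤) :
    Filter.Tendsto (fun x => Ψ x / Ψ (2 * B * x)) Filter.atTop (nhds 0) ∧
    ∃ β > (1 : ℝ),
      Filter.Tendsto (fun x => Ψ (β * x) / Ψ x) Filter.atTop Filter.atTop := by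
  have hB0 : 0 < B := lt_trans one_pos hB
  have hmono : MonotoneOn Ψ (Set.Ici 0) := hΨmono.monotoneOn
  have hΨpos : ∀ x : ℝ, 0 < x → 0 < Ψ x := by
    intro x hx
    have := hΨmono (Set.self_mem_Ici) (le_of_lt hx) hx
    rwa [hΨ0] at this
  have hΨnn : ∀ x : ℝ, 0 ≤ x → 0 ≤ Ψ x := by
    intro x hx
    rcases hx.eq_or_lt with h | h
    · rw [← h, hΨ0]
    · exact (hΨpos x h).le
  -- Ψ tends to infinity
  have hΨtop : Filter.Tendsto Ψ Filter.atTop Filter.atTop := by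
    apply Filter.tendsto_atTop_mono' _ _ Filter.tendsto_id
    filter_upwards [hΨlim.eventually_ge_atTop 1, Filter.eventually_gt_atTop (0:ℝ)]
      with x hx hx0
    have : x ≤ Ψ x := by
      have := (le_div_iff₀ hx0).mp hx
      linarith
    simpa using this
  -- monotonicity of Ψinv
  have hinvmono : ∀ y z : ℝ, 0 ≤ y → y ≤ z → Ψinv y ≤ Ψinv z := by
    intro y z hy hyz
    by_contra h
    push_neg at h
    have := hΨmono (hΨinv0 z (hy.trans hyz)) (hΨinv0 y hy) h
    rw [hΨinv2 y hy, hΨinv2 z (hy.trans hyz)] at this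
    linarith
  -- convexity: 2 Ψ t ≤ Ψ (2 t) for t ≥ 0
  have hdouble : ∀ t : ℝ, 0 ≤ t → 2 * Ψ t ≤ Ψ (2 * t) := by
    intro t ht
    have h := hΨconv.convexOn.2 (Set.self_mem_Ici) (Set.mem_Ici.mpr (by linarith : (0:ℝ) ≤ 2 * t))
      (by norm_num : (0:ℝ) ≤ 1/2) (by norm_num : (0:ℝ) ≤ 1/2) (by norm_num)
    have h2 : (1/2 : ℝ) • (0:ℝ) + (1/2 : ℝ) • (2*t) = t := by ring_nf
    rw [h2] at h
    simp only [smul_eq_mul, hΨ0] at h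
    linarith
  set f : ℝ → ENNReal := fun x => ENNReal.ofReal (1 / Ψ (B * Ψinv x)) with hf
  -- key estimate
  have key : ∀ t : ℝ, 1 ≤ t →
      ENNReal.ofReal (Ψ t / Ψ (2 * B * t)) ≤ ∫⁻ x in Set.Ioc (Ψ t) (Ψ (2 * t)), f x := by
    intro t ht
    have ht0 : 0 < t := lt_of_lt_of_le one_pos ht
    have hDpos : 0 < Ψ (2 * B * t) := hΨpos _ (by positivity)
    have hbound : ∀ x ∈ Set.Ioc (Ψ t) (Ψ (2 * t)),
        ENNReal.ofReal (1 / Ψ (2 * B * t)) ≤ f x := by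
      intro x hx
      have hxpos : 0 < x := lt_of_le_of_lt (hΨnn t ht0.le) hx.1
      have hit : t ≤ Ψinv x := by
        have := hinvmono (Ψ t) x (hΨnn t ht0.le) hx.1.le
        rwa [hΨinv1 t ht0.le] at this
      have hi2t : Ψinv x ≤ 2 * t := by
        have := hinvmono x (Ψ (2*t)) hxpos.le hx.2
        rwa [hΨinv1 (2*t) (by linarith)] at this
      have hnum : 0 < Ψ (B * Ψinv x) := hΨpos _ (by nlinarith)
      have hle : Ψ (B * Ψinv x) ≤ Ψ (2 * B * t) := by
        apply hmono (Set.mem_Ici.mpr (by nlinarith)) (Set.mem_Ici.mpr (by positivity))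
        nlinarith
      exact ENNReal.ofReal_le_ofReal (one_div_le_one_div_of_le hnum hle)
    calc ENNReal.ofReal (Ψ t / Ψ (2 * B * t))
        ≤ ENNReal.ofReal ((Ψ (2*t) - Ψ t) / Ψ (2 * B * t)) := by
          apply ENNReal.ofReal_le_ofReal
          have h2 := hdouble t ht0.le
          gcongr
          linarith
      _ ≤ ENNReal.ofReal (1 / Ψ (2 * B * t)) * volume (Set.Ioc (Ψ t) (Ψ (2*t))) := by
          rw [Real.volume_Ioc, ← ENNReal.ofReal_mul (by positivity)]
          apply ENNReal.ofReal_le_ofReal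
          rw [div_eq_mul_inv, one_div, mul_comm]
      _ = ∫⁻ _ in Set.Ioc (Ψ t) (Ψ (2*t)), ENNReal.ofReal (1 / Ψ (2 * B * t)) := by
          rw [setLIntegral_const, Real.volume_Ioc]
      _ ≤ ∫⁻ x in Set.Ioc (Ψ t) (Ψ (2*t)), f x :=
          setLIntegral_mono' measurableSet_Ioc hbound
  -- measurability of f on Ioi (Ψ 1)
  have hΨ1pos : 0 < Ψ 1 := hΨpos 1 one_pos
  have hant : AntitoneOn (fun x => 1 / Ψ (B * Ψinv x)) (Set.Ioi (Ψ 1)) := by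
    intro x hx y hy hxy
    have hx0 : 0 < x := lt_trans hΨ1pos hx
    have h1x : 1 ≤ Ψinv x := by
      have := hinvmono (Ψ 1) x (hΨnn 1 zero_le_one) (le_of_lt hx)
      rwa [hΨinv1 1 zero_le_one] at this
    have hinv : Ψinv x ≤ Ψinv y := hinvmono x y hx0.le hxy
    have hpx : 0 < Ψ (B * Ψinv x) := hΨpos _ (by nlinarith)
    have hle : Ψ (B * Ψinv x) ≤ Ψ (B * Ψinv y) :=
      hmono (Set.mem_Ici.mpr (by nlinarith)) (Set.mem_Ici.mpr (by nlinarith)) (by nlinarith)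
    exact one_div_le_one_div_of_le hpx hle
  set μ₀ := volume.restrict (Set.Ioi (Ψ 1)) with hμ₀
  have hmeasg : AEMeasurable (fun x => 1 / Ψ (B * Ψinv x)) μ₀ :=
    aemeasurable_restrict_of_antitoneOn measurableSet_Ioi hant
  have hmeasf : AEMeasurable f μ₀ :=
    ENNReal.measurable_ofReal.comp_aemeasurable hmeasg
  set fm := hmeasf.mk f with hfm
  set ν := μ₀.withDensity fm with hν
  have hfeq : f =ᵐ[μ₀] fm := hmeasf.ae_eq_mk
  haveI : IsFiniteMeasure ν := by
    constructor
    rw [hν, withDensity_apply _ MeasurableSet.univ, Measure.restrict_univ,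
      ← lintegral_congr_ae hfeq]
    exact hint
  have hInter : ⋂ a : ℝ, Set.Ioi a = (∅ : Set ℝ) := by
    ext x
    simp only [Set.mem_iInter, Set.mem_Ioi, Set.mem_empty_iff_false, iff_false]
    push_neg
    exact ⟨x, le_rfl⟩
  have htail0 : Filter.Tendsto (fun a : ℝ => ν (Set.Ioi a)) Filter.atTop (nhds 0) := by
    have h := tendsto_measure_iInter_atTop (μ := ν) (s := fun a : ℝ => Set.Ioi a)
      (fun a => measurableSet_Ioi.nullMeasurableSet)
      (fun a b hab => Set.Ioi_subset_Ioi hab) ⟨0, measure_ne_top ν _⟩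
    rw [hInter, measure_empty] at h
    exact h
  -- relate set lintegral to ν
  have hrel : ∀ a : ℝ, Ψ 1 ≤ a → (∫⁻ x in Set.Ioi a, f x) ≤ ν (Set.Ioi a) := by
    intro a ha
    rw [hν, withDensity_apply _ measurableSet_Ioi]
    have h1 : (∫⁻ x in Set.Ioi a, f x ∂μ₀) = ∫⁻ x in Set.Ioi a, fm x ∂μ₀ :=
      lintegral_congr_ae (ae_restrict_of_ae hfeq)
    rw [← h1, hμ₀, Measure.restrict_restrict measurableSet_Ioi,
      Set.inter_eq_left.mpr (Set.Ioi_subset_Ioi ha)]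
  have hcomp : Filter.Tendsto (fun t : ℝ => (ν (Set.Ioi (Ψ t))).toReal)
      Filter.atTop (nhds 0) := by
    have h1 : Filter.Tendsto (fun t : ℝ => ν (Set.Ioi (Ψ t))) Filter.atTop (nhds 0) :=
      htail0.comp hΨtop
    have h2 := (ENNReal.tendsto_toReal (by simp : (0:ENNReal) ≠ ⊤)).comp h1
    exact h2
  have part1 : Filter.Tendsto (fun x => Ψ x / Ψ (2 * B * x)) Filter.atTop (nhds 0) := by
    apply squeeze_zero' ?_ ?_ hcomp
    · filter_upwards [Filter.eventually_ge_atTop (1:ℝ)] with t ht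
      exact div_nonneg (hΨnn t (by linarith)) (hΨnn (2*B*t) (by nlinarith))
    · filter_upwards [Filter.eventually_ge_atTop (1:ℝ)] with t ht
      have ht0 : (0:ℝ) < t := lt_of_lt_of_le one_pos ht
      have hch : ENNReal.ofReal (Ψ t / Ψ (2*B*t)) ≤ ν (Set.Ioi (Ψ t)) := by
        calc ENNReal.ofReal (Ψ t / Ψ (2*B*t)) ≤ ∫⁻ x in Set.Ioc (Ψ t) (Ψ (2*t)), f x :=
              key t ht
          _ ≤ ∫⁻ x in Set.Ioi (Ψ t), f x :=
              lintegral_mono_set Set.Ioc_subset_Ioi_self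
          _ ≤ ν (Set.Ioi (Ψ t)) := hrel (Ψ t) (hmono (Set.mem_Ici.mpr zero_le_one)
              (Set.mem_Ici.mpr ht0.le) ht)
      have h3 := ENNReal.toReal_mono (measure_ne_top ν _) hch
      rwa [ENNReal.toReal_ofReal
        (div_nonneg (hΨnn t ht0.le) (hΨpos (2*B*t) (by nlinarith)).le)] at h3
  refine ⟨part1, 2*B, by linarith, ?_⟩
  have heq : (fun x => Ψ (2*B*x) / Ψ x) = fun x => (Ψ x / Ψ (2*B*x))⁻¹ := by
    funext x
    rw [inv_div]
  rw [heq]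
  apply Filter.Tendsto.inv_tendsto_nhdsGT_zero
  rw [tendsto_nhdsWithin_iff]
  refine ⟨part1, ?_⟩
  filter_upwards [Filter.eventually_gt_atTop (0:ℝ)] with x hx
  exact Set.mem_Ioi.mpr (div_pos (hΨpos x hx) (hΨpos _ (by nlinarith)))
end
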